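/- arXiv:1802.05681 — 6 statements merged into one kernel-verified Lean document; each statement's English description precedes it below -/
import Mathlib

section
/- Let J ≥ 1 and let B be a J×J real matrix that is a strictly diagonally dominant M-matrix, i.e., B_{ij} ≤ 0 for all i ≠ j and B_{ii} > Σ_{j≠i} |B_{ij}| for all i. Fix b, g ∈ ℝ^J and define F : ℝ^J → ℝ^J by F(x)_j = min((Bx − b)_j, x_j − g_j). Then F is inverse monotone: for all y, z ∈ ℝ^J, if F(y) ≤ F(z) componentwise, then y ≤ z componentwise. -/
/-- If `B` is a strictly diagonally dominant M-matrix
(`B_{ij} ≤ 0` for `i ≠ j` and `B_{ii} > Σ_{j≠i} |B_{ij}|`), then the map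
`F(x)_j = min((Bx − b)_j, x_j − g_j)` is inverse monotone. -/
theorem obstacle_map_inverse_monotone
    (J : ℕ) (hJ : 1 ≤ J) (B : Matrix (Fin J) (Fin J) ℝ)
    (hoff : ∀ i j, i ≠ j → B i j ≤ 0)
    (hdiag : ∀ i, ∑ j ∈ Finset.univ.erase i, |B i j| < B i i)
    (b g : Fin J → ℝ)
    (F : (Fin J → ℝ) → (Fin J → ℝ))
    (hF : ∀ x j, F x j = min ((B.mulVec x - b) j) (x j - g j))
    (y z : Fin J → ℝ) (hyz : ∀ j, F y j ≤ F z j) :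
    ∀ j, y j ≤ z j := by
  by_contra hcon
  push_neg at hcon
  obtain ⟨j0, hj0⟩ := hcon
  set w : Fin J → ℝ := fun j => y j - z j with hw
  obtain ⟨i, _, hi⟩ := Finset.exists_max_image Finset.univ w ⟨j0, Finset.mem_univ j0⟩
  have hM : 0 < w i := lt_of_lt_of_le (by simpa [hw] using hj0) (hi j0 (Finset.mem_univ j0))
  have h := hyz i
  rw [hF, hF] at h
  -- case split on which term achieves the min in F y i
  rcases le_or_gt (y i - g i) ((B.mulVec y - b) i) with hcase | hcase
  · have h1 : y i - g i ≤ z i - g i := by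
      calc y i - g i = min ((B.mulVec y - b) i) (y i - g i) := (min_eq_right hcase).symm
        _ ≤ min ((B.mulVec z - b) i) (z i - g i) := h
        _ ≤ z i - g i := min_le_right _ _
    have : w i ≤ 0 := by simp [hw]; linarith
    linarith
  · have h1 : (B.mulVec y - b) i ≤ (B.mulVec z - b) i :=
      le_trans (min_eq_left hcase.le ▸ h) (min_le_left _ _)
    have h2 : (B.mulVec w) i ≤ 0 := by
      have : B.mulVec w = B.mulVec y - B.mulVec z := by
        funext k
        simp [Matrix.mulVec, dotProduct, hw, mul_sub, Finset.sum_sub_distrib]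
      rw [this]
      simp only [Pi.sub_apply]
      have := h1
      simp only [Pi.sub_apply] at this
      linarith
    -- lower bound on (B w) i
    have hsplit : (B.mulVec w) i = B i i * w i + ∑ j ∈ Finset.univ.erase i, B i j * w j := by
      rw [Matrix.mulVec, dotProduct, ← Finset.add_sum_erase _ _ (Finset.mem_univ i)]
    have hterm : ∀ j ∈ Finset.univ.erase i, B i j * w i ≤ B i j * w j := by
      intro j hj
      have hne : j ≠ i := (Finset.mem_erase.mp hj).1
      exact mul_le_mul_of_nonpos_left (hi j (Finset.mem_univ j)) (hoff i j hne.symm)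
    have hsum : ∑ j ∈ Finset.univ.erase i, B i j * w i ≤
        ∑ j ∈ Finset.univ.erase i, B i j * w j := Finset.sum_le_sum hterm
    have habs : ∑ j ∈ Finset.univ.erase i, B i j * w i =
        -(∑ j ∈ Finset.univ.erase i, |B i j|) * w i := by
      have e1 : ∑ j ∈ Finset.univ.erase i, B i j
          = -(∑ j ∈ Finset.univ.erase i, |B i j|) := by
        rw [← Finset.sum_neg_distrib]
        refine Finset.sum_congr rfl fun j hj => ?_
        rw [abs_of_nonpos (hoff i j ((Finset.mem_erase.mp hj).1.symm))]; ring
      rw [← Finset.sum_mul, e1]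
    have hfin : 0 < (B.mulVec w) i := by
      rw [hsplit]
      have h3 : (B i i - ∑ j ∈ Finset.univ.erase i, |B i j|) * w i > 0 :=
        mul_pos (by linarith [hdiag i]) hM
      nlinarith [hsum, habs]
    linarith
end

section
/- Let T > 0 and let Ω = (x_min, x_max) ⊂ ℝ. Let v : [0,T] × [x_min, x_max] → ℝ be such that the partial derivatives ∂_t v, ∂_t² v, ∂_t³ v, ∂_x v, ∂_x² v, ∂_x³ v, ∂_x⁴ v exist, and are continuous and bounded. Let σ², b, r : [0,T] × [x_min, x_max] → ℝ be bounded, twice continuously differentiable in t with bounded derivatives, and let φ, f : [0,T] × [x_min, x_max] → ℝ be twice continuously differentiable in t with bounded derivatives. Assume that v is a classical solution of the obstacle equation min(∂_t v + 𝒜v − f, v − φ − f) = 0 on (0,T) × Ω, where 𝒜v := −(1/2)σ² ∂_x² v + b ∂_x v + r v. Then there is a constant C ≥ 0 (depending only on the data above) such that for all τ > 0, h > 0 and all (t,x) with [t, t+τ] ⊆ [0,T] and [x−h, x+h] ⊆ [x_min, x_max], the Crank–Nicolson residual S¹(t,x) := min( (v(t+τ,x) − v(t,x))/τ + (1/2)(𝒜_h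 v)(t+τ,x) + (1/2)(𝒜_h v)(t,x) − f(t+τ/2, x), v(t+τ,x) − φ(t+τ,x) − f(t+τ,x) ) satisfies |S¹(t,x)| ≤ C(τ² + h²). -/
open Set Filter Topology

/-- The centered finite-difference approximation of
`𝒜w = −(1/2)σ² ∂ₓ²w + b ∂ₓw + r w` with mesh step `h`
(here `s2` stands for `σ²`). -/
noncomputable def Ah (s2 b r w : ℝ → ℝ → ℝ) (h t x : ℝ) : ℝ :=
  (1/2) * s2 t x * ((-(w t (x - h)) + 2 * w t x - w t (x + h)) / h^2)
    + b t x * ((w t (x + h) - w t (x - h)) / (2*h))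
    + r t x * w t x

/-- `g` is bounded on `[0,T] × [xmin,xmax]`. -/
def BddOn2 (g : ℝ → ℝ → ℝ) (T xmin xmax : ℝ) : Prop :=
  ∃ M : ℝ, ∀ t ∈ Icc (0:ℝ) T, ∀ x ∈ Icc xmin xmax, |g t x| ≤ M

/-- `g` is (jointly) continuous on `[0,T] × [xmin,xmax]`. -/
def ContOn2 (g : ℝ → ℝ → ℝ) (T xmin xmax : ℝ) : Prop :=
  ContinuousOn (fun p : ℝ × ℝ => g p.1 p.2) (Icc (0:ℝ) T ×ˢ Icc xmin xmax)

/-- `g` is twice continuously differentiable in `t` on `[0,T] × [xmin,xmax]`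
with (first and second) `t`-derivatives `gt, gtt` that are continuous and
bounded. -/
def C2inT (g gt gtt : ℝ → ℝ → ℝ) (T xmin xmax : ℝ) : Prop :=
  (∀ x ∈ Icc xmin xmax, ∀ t ∈ Icc (0:ℝ) T,
    HasDerivWithinAt (fun s => g s x) (gt t x) (Icc (0:ℝ) T) t ∧
    HasDerivWithinAt (fun s => gt s x) (gtt t x) (Icc (0:ℝ) T) t) ∧
  ContOn2 gt T xmin xmax ∧ ContOn2 gtt T xmin xmax ∧
  BddOn2 gt T xmin xmax ∧ BddOn2 gtt T xmin xmax


lemma poly_bound {a b K : ℝ} {n : ℕ} {φ φ' : ℝ → ℝ} (hab : a ≤ b) (hK : 0 ≤ K)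
    (hd : ∀ s ∈ Icc a b, HasDerivWithinAt φ (φ' s) (Icc a b) s)
    (h0 : φ a = 0)
    (hb : ∀ s ∈ Icc a b, |φ' s| ≤ K * (s - a) ^ n) :
    |φ b| ≤ K / (n + 1) * (b - a) ^ (n + 1) := by
  have hcont : ContinuousOn φ (Icc a b) := fun s hs => (hd s hs).continuousWithinAt
  have hf' : ∀ s ∈ Ico a b, HasDerivWithinAt φ (φ' s) (Ici s) s := by
    intro s hs
    exact (hd s (Ico_subset_Icc_self hs)).mono_of_mem_nhdsWithin
      (Icc_mem_nhdsGE_of_mem ⟨hs.1, hs.2⟩)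
  have hB' : ∀ s, HasDerivAt (fun s => K / (n + 1) * (s - a) ^ (n + 1)) (K * (s - a) ^ n) s := by
    intro s
    have hne : ((n : ℝ) + 1) ≠ 0 := by positivity
    have h1 : HasDerivAt (fun s : ℝ => s - a) 1 s := (hasDerivAt_id s).sub_const a
    have h2 := (h1.pow (n + 1)).const_mul (K / (n + 1))
    refine h2.congr_deriv ?_
    simp only [Nat.add_sub_cancel, mul_one]
    push_cast
    field_simp
  have key := image_norm_le_of_norm_deriv_right_le_deriv_boundary hcont hf'
      (by simp [h0]) hB'
      (fun s hs => by simpa [Real.norm_eq_abs] using hb s (Ico_subset_Icc_self hs))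
  simpa [Real.norm_eq_abs] using key (right_mem_Icc.2 hab)

lemma taylor1_bound {a b M : ℝ} {g g1 g2 : ℝ → ℝ} (hab : a ≤ b) (hM : 0 ≤ M)
    (hg : ∀ s ∈ Icc a b, HasDerivWithinAt g (g1 s) (Icc a b) s)
    (hg1 : ∀ s ∈ Icc a b, HasDerivWithinAt g1 (g2 s) (Icc a b) s)
    (hMb : ∀ s ∈ Icc a b, |g2 s| ≤ M) :
    |g b - g a - (b - a) * g1 a| ≤ M / 2 * (b - a) ^ 2 := by
  have step1 : ∀ s ∈ Icc a b, |g1 s - g1 a| ≤ M * (s - a) ^ 1 := by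
    intro s hs
    have hsub : Icc a s ⊆ Icc a b := Icc_subset_Icc le_rfl hs.2
    have h := poly_bound (n := 0) hs.1 hM
      (fun u hu => ((hg1 u (hsub hu)).sub_const (g1 a)).mono hsub)
      (by simp)
      (fun u hu => by simpa using hMb u (hsub hu))
    simpa using h
  have lin : ∀ s ∈ Icc a b, HasDerivWithinAt (fun u : ℝ => (u - a) * g1 a) (g1 a) (Icc a b) s := by
    intro s hs
    simpa using ((hasDerivWithinAt_id s (Icc a b)).sub_const a).mul_const (g1 a)
  have h := poly_bound (n := 1) hab hM
    (fun u hu => ((hg u hu).sub_const (g a)).sub (lin u hu))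
    (by simp)
    (fun u hu => step1 u hu)
  calc |g b - g a - (b - a) * g1 a|
    _ ≤ M / (1 + 1) * (b - a) ^ (1 + 1) := by simpa using h
    _ = M / 2 * (b - a) ^ 2 := by norm_num

lemma taylor2_bound {a b M : ℝ} {g g1 g2 g3 : ℝ → ℝ} (hab : a ≤ b) (hM : 0 ≤ M)
    (hg : ∀ s ∈ Icc a b, HasDerivWithinAt g (g1 s) (Icc a b) s)
    (hg1 : ∀ s ∈ Icc a b, HasDerivWithinAt g1 (g2 s) (Icc a b) s)
    (hg2 : ∀ s ∈ Icc a b, HasDerivWithinAt g2 (g3 s) (Icc a b) s)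
    (hMb : ∀ s ∈ Icc a b, |g3 s| ≤ M) :
    |g b - g a - (b - a) * g1 a - (b - a) ^ 2 / 2 * g2 a| ≤ M / 6 * (b - a) ^ 3 := by
  have step1 : ∀ s ∈ Icc a b, |g1 s - g1 a - (s - a) * g2 a| ≤ M / 2 * (s - a) ^ 2 := by
    intro s hs
    have hsub : Icc a s ⊆ Icc a b := Icc_subset_Icc le_rfl hs.2
    exact taylor1_bound hs.1 hM (fun u hu => (hg1 u (hsub hu)).mono hsub)
      (fun u hu => (hg2 u (hsub hu)).mono hsub) (fun u hu => hMb u (hsub hu))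
  have lin : ∀ s ∈ Icc a b, HasDerivWithinAt (fun u : ℝ => (u - a) * g1 a) (g1 a) (Icc a b) s := by
    intro s hs
    simpa using ((hasDerivWithinAt_id s (Icc a b)).sub_const a).mul_const (g1 a)
  have quad : ∀ s ∈ Icc a b,
      HasDerivWithinAt (fun u : ℝ => (u - a) ^ 2 / 2 * g2 a) ((s - a) * g2 a) (Icc a b) s := by
    intro s hs
    have h := ((((hasDerivWithinAt_id s (Icc a b)).sub_const a).pow 2).div_const 2).mul_const (g2 a)
    refine h.congr_deriv ?_
    simp only [id_eq]
    push_cast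
    ring
  have h := poly_bound (n := 2) hab (by positivity : (0:ℝ) ≤ M / 2)
    (fun u hu => (((hg u hu).sub_const (g a)).sub (lin u hu)).sub (quad u hu))
    (by simp)
    (fun u hu => step1 u hu)
  calc |g b - g a - (b - a) * g1 a - (b - a) ^ 2 / 2 * g2 a|
    _ ≤ M / 2 / (2 + 1) * (b - a) ^ (2 + 1) := by simpa using h
    _ = M / 6 * (b - a) ^ 3 := by ring

lemma taylor3_bound {a b M : ℝ} {g g1 g2 g3 g4 : ℝ → ℝ} (hab : a ≤ b) (hM : 0 ≤ M)
    (hg : ∀ s ∈ Icc a b, HasDerivWithinAt g (g1 s) (Icc a b) s)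
    (hg1 : ∀ s ∈ Icc a b, HasDerivWithinAt g1 (g2 s) (Icc a b) s)
    (hg2 : ∀ s ∈ Icc a b, HasDerivWithinAt g2 (g3 s) (Icc a b) s)
    (hg3 : ∀ s ∈ Icc a b, HasDerivWithinAt g3 (g4 s) (Icc a b) s)
    (hMb : ∀ s ∈ Icc a b, |g4 s| ≤ M) :
    |g b - g a - (b - a) * g1 a - (b - a) ^ 2 / 2 * g2 a - (b - a) ^ 3 / 6 * g3 a|
      ≤ M / 24 * (b - a) ^ 4 := by
  have step1 : ∀ s ∈ Icc a b,
      |g1 s - g1 a - (s - a) * g2 a - (s - a) ^ 2 / 2 * g3 a| ≤ M / 6 * (s - a) ^ 3 := by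
    intro s hs
    have hsub : Icc a s ⊆ Icc a b := Icc_subset_Icc le_rfl hs.2
    exact taylor2_bound hs.1 hM (fun u hu => (hg1 u (hsub hu)).mono hsub)
      (fun u hu => (hg2 u (hsub hu)).mono hsub)
      (fun u hu => (hg3 u (hsub hu)).mono hsub) (fun u hu => hMb u (hsub hu))
  have lin : ∀ s ∈ Icc a b, HasDerivWithinAt (fun u : ℝ => (u - a) * g1 a) (g1 a) (Icc a b) s := by
    intro s hs
    simpa using ((hasDerivWithinAt_id s (Icc a b)).sub_const a).mul_const (g1 a)
  have quad : ∀ s ∈ Icc a b,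
      HasDerivWithinAt (fun u : ℝ => (u - a) ^ 2 / 2 * g2 a) ((s - a) * g2 a) (Icc a b) s := by
    intro s hs
    have h := ((((hasDerivWithinAt_id s (Icc a b)).sub_const a).pow 2).div_const 2).mul_const (g2 a)
    refine h.congr_deriv ?_
    simp only [id_eq]
    push_cast
    ring
  have cub : ∀ s ∈ Icc a b,
      HasDerivWithinAt (fun u : ℝ => (u - a) ^ 3 / 6 * g3 a) ((s - a) ^ 2 / 2 * g3 a) (Icc a b) s := by
    intro s hs
    have h := ((((hasDerivWithinAt_id s (Icc a b)).sub_const a).pow 3).div_const 6).mul_const (g3 a)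
    refine h.congr_deriv ?_
    simp only [id_eq]
    push_cast
    ring
  have h := poly_bound (n := 3) hab (by positivity : (0:ℝ) ≤ M / 6)
    (fun u hu => ((((hg u hu).sub_const (g a)).sub (lin u hu)).sub (quad u hu)).sub (cub u hu))
    (by simp)
    (fun u hu => step1 u hu)
  calc |g b - g a - (b - a) * g1 a - (b - a) ^ 2 / 2 * g2 a - (b - a) ^ 3 / 6 * g3 a|
    _ ≤ M / 6 / (3 + 1) * (b - a) ^ (3 + 1) := by simpa using h
    _ = M / 24 * (b - a) ^ 4 := by ring

lemma abs_sub_le' (a b : ℝ) : |a - b| ≤ |a| + |b| := abs_sub a b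

lemma E1_est {t τ M : ℝ} {g g1 g2 g3 : ℝ → ℝ} (hτ : 0 < τ) (hM : 0 ≤ M)
    (hg : ∀ s ∈ Icc t (t + τ), HasDerivWithinAt g (g1 s) (Icc t (t + τ)) s)
    (hg1 : ∀ s ∈ Icc t (t + τ), HasDerivWithinAt g1 (g2 s) (Icc t (t + τ)) s)
    (hg2 : ∀ s ∈ Icc t (t + τ), HasDerivWithinAt g2 (g3 s) (Icc t (t + τ)) s)
    (hMb : ∀ s ∈ Icc t (t + τ), |g3 s| ≤ M) :
    |(g (t + τ) - g t) / τ - (g1 t + g1 (t + τ)) / 2| ≤ M * τ ^ 2 := by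
  have hab : t ≤ t + τ := by linarith
  have T2 := taylor2_bound hab hM hg hg1 hg2 hMb
  have T1 := taylor1_bound hab hM hg1 hg2 hMb
  have e : t + τ - t = τ := by ring
  rw [e] at T2 T1
  set R1 := g (t + τ) - g t - τ * g1 t - τ ^ 2 / 2 * g2 t with hR1
  set R2 := g1 (t + τ) - g1 t - τ * g2 t with hR2
  have key : (g (t + τ) - g t) / τ - (g1 t + g1 (t + τ)) / 2 = R1 / τ - R2 / 2 := by
    rw [hR1, hR2]; field_simp; ring
  rw [key]
  have h1 : |R1 / τ| ≤ M / 6 * τ ^ 2 := by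
    rw [abs_div, abs_of_pos hτ, div_le_iff₀ hτ]
    calc |R1| ≤ M / 6 * τ ^ 3 := T2
      _ = M / 6 * τ ^ 2 * τ := by ring
  have h2 : |R2 / 2| ≤ M / 4 * τ ^ 2 := by
    rw [abs_div]
    have : |(2:ℝ)| = 2 := by norm_num
    rw [this]
    nlinarith [T1]
  calc |R1 / τ - R2 / 2| ≤ |R1 / τ| + |R2 / 2| := abs_sub _ _
    _ ≤ M / 6 * τ ^ 2 + M / 4 * τ ^ 2 := add_le_add h1 h2
    _ ≤ M * τ ^ 2 := by nlinarith [sq_nonneg τ]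

lemma E2_est {t τ M : ℝ} {g g1 g2 : ℝ → ℝ} (hτ : 0 < τ) (hM : 0 ≤ M)
    (hg : ∀ s ∈ Icc t (t + τ), HasDerivWithinAt g (g1 s) (Icc t (t + τ)) s)
    (hg1 : ∀ s ∈ Icc t (t + τ), HasDerivWithinAt g1 (g2 s) (Icc t (t + τ)) s)
    (hMb : ∀ s ∈ Icc t (t + τ), |g2 s| ≤ M) :
    |g (t + τ / 2) - (g t + g (t + τ)) / 2| ≤ M * τ ^ 2 := by
  have hab : t ≤ t + τ := by linarith
  have hab2 : t ≤ t + τ / 2 := by linarith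
  have hsub : Icc t (t + τ / 2) ⊆ Icc t (t + τ) := Icc_subset_Icc le_rfl (by linarith)
  have T1 := taylor1_bound hab hM hg hg1 hMb
  have T2 := taylor1_bound hab2 hM (fun u hu => (hg u (hsub hu)).mono hsub)
    (fun u hu => (hg1 u (hsub hu)).mono hsub) (fun u hu => hMb u (hsub hu))
  have e : t + τ - t = τ := by ring
  have e2 : t + τ / 2 - t = τ / 2 := by ring
  rw [e] at T1
  rw [e2] at T2
  set R1 := g (t + τ) - g t - τ * g1 t with hR1
  set R2 := g (t + τ / 2) - g t - τ / 2 * g1 t with hR2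
  have key : g (t + τ / 2) - (g t + g (t + τ)) / 2 = R2 - R1 / 2 := by
    rw [hR1, hR2]; ring
  rw [key]
  calc |R2 - R1 / 2| ≤ |R2| + |R1 / 2| := abs_sub _ _
    _ ≤ M / 2 * (τ / 2) ^ 2 + (M / 2 * τ ^ 2) / 2 := by
        refine add_le_add T2 ?_
        rw [abs_div]
        have : |(2:ℝ)| = 2 := by norm_num
        rw [this]
        linarith [T1]
    _ ≤ M * τ ^ 2 := by nlinarith [sq_nonneg τ]

lemma D2_est {x h M : ℝ} {g g1 g2 g3 g4 : ℝ → ℝ} (hh : 0 < h) (hM : 0 ≤ M)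
    (hg : ∀ y ∈ Icc (x - h) (x + h), HasDerivWithinAt g (g1 y) (Icc (x - h) (x + h)) y)
    (hg1 : ∀ y ∈ Icc (x - h) (x + h), HasDerivWithinAt g1 (g2 y) (Icc (x - h) (x + h)) y)
    (hg2 : ∀ y ∈ Icc (x - h) (x + h), HasDerivWithinAt g2 (g3 y) (Icc (x - h) (x + h)) y)
    (hg3 : ∀ y ∈ Icc (x - h) (x + h), HasDerivWithinAt g3 (g4 y) (Icc (x - h) (x + h)) y)
    (hMb : ∀ y ∈ Icc (x - h) (x + h), |g4 y| ≤ M) :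
    |(-(g (x - h)) + 2 * g x - g (x + h)) / h ^ 2 + g2 x| ≤ 2 * M * h ^ 2 := by
  have hab1 : x - h ≤ x := by linarith
  have hab2 : x - h ≤ x + h := by linarith
  have hsub : Icc (x - h) x ⊆ Icc (x - h) (x + h) := Icc_subset_Icc le_rfl (by linarith)
  have T3a := taylor3_bound hab1 hM (fun u hu => (hg u (hsub hu)).mono hsub)
    (fun u hu => (hg1 u (hsub hu)).mono hsub) (fun u hu => (hg2 u (hsub hu)).mono hsub)
    (fun u hu => (hg3 u (hsub hu)).mono hsub) (fun u hu => hMb u (hsub hu))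
  have T3b := taylor3_bound hab2 hM hg hg1 hg2 hg3 hMb
  have T1c := taylor1_bound hab1 hM (fun u hu => (hg2 u (hsub hu)).mono hsub)
    (fun u hu => (hg3 u (hsub hu)).mono hsub) (fun u hu => hMb u (hsub hu))
  have e1 : x - (x - h) = h := by ring
  have e2 : x + h - (x - h) = 2 * h := by ring
  rw [e1] at T3a T1c
  rw [e2] at T3b
  set a := x - h
  set R1 := g x - g a - h * g1 a - h ^ 2 / 2 * g2 a - h ^ 3 / 6 * g3 a with hR1
  set R2 := g (x + h) - g a - 2 * h * g1 a - (2 * h) ^ 2 / 2 * g2 a - (2 * h) ^ 3 / 6 * g3 a with hR2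
  set R3 := g2 x - g2 a - h * g3 a with hR3
  have h2 : (0:ℝ) < h ^ 2 := by positivity
  have key : (-(g a) + 2 * g x - g (x + h)) / h ^ 2 + g2 x = (2 * R1 - R2) / h ^ 2 + R3 := by
    rw [hR1, hR2, hR3]; field_simp; ring
  rw [key]
  have hb : |(2 * R1 - R2) / h ^ 2| ≤ M * h ^ 2 := by
    rw [abs_div, abs_of_pos h2, div_le_iff₀ h2]
    have : |2 * R1 - R2| ≤ 2 * |R1| + |R2| := by
      calc |2 * R1 - R2| ≤ |2 * R1| + |R2| := abs_sub _ _
        _ = 2 * |R1| + |R2| := by rw [abs_mul]; norm_num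
    calc |2 * R1 - R2| ≤ 2 * |R1| + |R2| := this
      _ ≤ 2 * (M / 24 * h ^ 4) + M / 24 * (2 * h) ^ 4 := by
          refine add_le_add (by linarith [T3a]) T3b
      _ ≤ M * h ^ 2 * h ^ 2 := by nlinarith [pow_pos hh 4]
  calc |(2 * R1 - R2) / h ^ 2 + R3| ≤ |(2 * R1 - R2) / h ^ 2| + |R3| := abs_add_le _ _
    _ ≤ M * h ^ 2 + M / 2 * h ^ 2 := add_le_add hb T1c
    _ ≤ 2 * M * h ^ 2 := by nlinarith [sq_nonneg h]

lemma D1_est {x h M : ℝ} {g g1 g2 g3 : ℝ → ℝ} (hh : 0 < h) (hM : 0 ≤ M)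
    (hg : ∀ y ∈ Icc (x - h) (x + h), HasDerivWithinAt g (g1 y) (Icc (x - h) (x + h)) y)
    (hg1 : ∀ y ∈ Icc (x - h) (x + h), HasDerivWithinAt g1 (g2 y) (Icc (x - h) (x + h)) y)
    (hg2 : ∀ y ∈ Icc (x - h) (x + h), HasDerivWithinAt g2 (g3 y) (Icc (x - h) (x + h)) y)
    (hMb : ∀ y ∈ Icc (x - h) (x + h), |g3 y| ≤ M) :
    |(g (x + h) - g (x - h)) / (2 * h) - g1 x| ≤ 2 * M * h ^ 2 := by
  have hab1 : x - h ≤ x := by linarith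
  have hab2 : x - h ≤ x + h := by linarith
  have hsub : Icc (x - h) x ⊆ Icc (x - h) (x + h) := Icc_subset_Icc le_rfl (by linarith)
  have T2b := taylor2_bound hab2 hM hg hg1 hg2 hMb
  have T1d := taylor1_bound hab1 hM (fun u hu => (hg1 u (hsub hu)).mono hsub)
    (fun u hu => (hg2 u (hsub hu)).mono hsub) (fun u hu => hMb u (hsub hu))
  have e1 : x - (x - h) = h := by ring
  have e2 : x + h - (x - h) = 2 * h := by ring
  rw [e1] at T1d
  rw [e2] at T2b
  set a := x - h
  set R2 := g (x + h) - g a - 2 * h * g1 a - (2 * h) ^ 2 / 2 * g2 a with hR2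
  set R3 := g1 x - g1 a - h * g2 a with hR3
  have h2h : (0:ℝ) < 2 * h := by linarith
  have key : (g (x + h) - g a) / (2 * h) - g1 x = R2 / (2 * h) - R3 := by
    rw [hR2, hR3]; field_simp; ring
  rw [key]
  have hb : |R2 / (2 * h)| ≤ M * h ^ 2 := by
    rw [abs_div, abs_of_pos h2h, div_le_iff₀ h2h]
    calc |R2| ≤ M / 6 * (2 * h) ^ 3 := T2b
      _ ≤ M * h ^ 2 * (2 * h) := by nlinarith [pow_pos hh 3]
  calc |R2 / (2 * h) - R3| ≤ |R2 / (2 * h)| + |R3| := abs_sub _ _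
    _ ≤ M * h ^ 2 + M / 2 * h ^ 2 := add_le_add hb T1d
    _ ≤ 2 * M * h ^ 2 := by nlinarith [sq_nonneg h]

lemma endpoint_eq {F : ℝ → ℝ} {u v c : ℝ} (huv : u < v)
    (hF : ContinuousOn F (Icc u v)) (h : ∀ s ∈ Ioo u v, F s = c) :
    F u = c ∧ F v = c := by
  have hne1 : (𝓝[Ioo u v] u).NeBot := by
    rw [nhdsWithin_Ioo_eq_nhdsGT huv]; infer_instance
  have hne2 : (𝓝[Ioo u v] v).NeBot := by
    rw [nhdsWithin_Ioo_eq_nhdsLT huv]; infer_instance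
  constructor
  · have h1 : Tendsto F (𝓝[Ioo u v] u) (𝓝 (F u)) :=
      (hF u (left_mem_Icc.2 huv.le)).mono Ioo_subset_Icc_self
    have h2 : Tendsto F (𝓝[Ioo u v] u) (𝓝 c) := by
      refine tendsto_const_nhds.congr' ?_
      filter_upwards [self_mem_nhdsWithin] with s hs using (h s hs).symm
    exact tendsto_nhds_unique h1 h2
  · have h1 : Tendsto F (𝓝[Ioo u v] v) (𝓝 (F v)) :=
      (hF v (right_mem_Icc.2 huv.le)).mono Ioo_subset_Icc_self
    have h2 : Tendsto F (𝓝[Ioo u v] v) (𝓝 c) := by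
      refine tendsto_const_nhds.congr' ?_
      filter_upwards [self_mem_nhdsWithin] with s hs using (h s hs).symm
    exact tendsto_nhds_unique h1 h2

lemma abs_mul_le {c X Mc MX : ℝ} (h1 : |c| ≤ Mc) (h2 : |X| ≤ MX) : |c * X| ≤ Mc * MX := by
  rw [abs_mul]
  exact mul_le_mul h1 h2 (abs_nonneg _) ((abs_nonneg c).trans h1)

lemma bdd_nonneg {g : ℝ → ℝ → ℝ} {T xmin xmax : ℝ} (h : BddOn2 g T xmin xmax) :
    ∃ M : ℝ, 0 ≤ M ∧ ∀ t ∈ Icc (0:ℝ) T, ∀ x ∈ Icc xmin xmax, |g t x| ≤ M := by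
  obtain ⟨M, hM⟩ := h
  exact ⟨max M 0, le_max_right _ _, fun t ht x hx => (hM t ht x hx).trans (le_max_left _ _)⟩

lemma ContOn2.slice {g : ℝ → ℝ → ℝ} {T xmin xmax x : ℝ} (hg : ContOn2 g T xmin xmax)
    (hx : x ∈ Icc xmin xmax) : ContinuousOn (fun s => g s x) (Icc (0:ℝ) T) :=
  ContinuousOn.comp hg ((continuous_id.prodMk continuous_const).continuousOn)
    (fun s hs => Set.mem_prod.2 ⟨hs, hx⟩)

set_option maxHeartbeats 2000000 in
/-- Second-order consistency (in time and space) of the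
Crank–Nicolson residual `S¹` for a classical solution `v` of the obstacle
equation `min(∂ₜv + 𝒜v − f, v − φ − f) = 0`:
`|S¹(t,x)| ≤ C(τ² + h²)`. -/
theorem CN_obstacle_residual_second_order
    (T xmin xmax : ℝ) (hT : 0 < T) (hx : xmin < xmax)
    (v vt vtt vttt vx vxx vx3 vx4 s2 b r φ f : ℝ → ℝ → ℝ)
    -- the first three partial t-derivatives of v exist on [0,T]×[xmin,xmax]
    (hvt : ∀ x ∈ Icc xmin xmax, ∀ t ∈ Icc (0:ℝ) T,
      HasDerivWithinAt (fun s => v s x) (vt t x) (Icc (0:ℝ) T) t)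
    (hvtt : ∀ x ∈ Icc xmin xmax, ∀ t ∈ Icc (0:ℝ) T,
      HasDerivWithinAt (fun s => vt s x) (vtt t x) (Icc (0:ℝ) T) t)
    (hvttt : ∀ x ∈ Icc xmin xmax, ∀ t ∈ Icc (0:ℝ) T,
      HasDerivWithinAt (fun s => vtt s x) (vttt t x) (Icc (0:ℝ) T) t)
    -- the first four partial x-derivatives of v exist on [0,T]×[xmin,xmax]
    (hvx : ∀ t ∈ Icc (0:ℝ) T, ∀ x ∈ Icc xmin xmax,
      HasDerivWithinAt (fun y => v t y) (vx t x) (Icc xmin xmax) x)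
    (hvxx : ∀ t ∈ Icc (0:ℝ) T, ∀ x ∈ Icc xmin xmax,
      HasDerivWithinAt (fun y => vx t y) (vxx t x) (Icc xmin xmax) x)
    (hvx3 : ∀ t ∈ Icc (0:ℝ) T, ∀ x ∈ Icc xmin xmax,
      HasDerivWithinAt (fun y => vxx t y) (vx3 t x) (Icc xmin xmax) x)
    (hvx4 : ∀ t ∈ Icc (0:ℝ) T, ∀ x ∈ Icc xmin xmax,
      HasDerivWithinAt (fun y => vx3 t y) (vx4 t x) (Icc xmin xmax) x)
    -- the partial derivatives are continuous
    (hcont : ContOn2 vt T xmin xmax ∧ ContOn2 vtt T xmin xmax ∧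
      ContOn2 vttt T xmin xmax ∧ ContOn2 vx T xmin xmax ∧
      ContOn2 vxx T xmin xmax ∧ ContOn2 vx3 T xmin xmax ∧ ContOn2 vx4 T xmin xmax)
    -- the partial derivatives are bounded
    (hbdd : BddOn2 vt T xmin xmax ∧ BddOn2 vtt T xmin xmax ∧
      BddOn2 vttt T xmin xmax ∧ BddOn2 vx T xmin xmax ∧
      BddOn2 vxx T xmin xmax ∧ BddOn2 vx3 T xmin xmax ∧ BddOn2 vx4 T xmin xmax)
    -- σ², b, r are bounded and C² in t with bounded derivatives
    (hs2 : BddOn2 s2 T xmin xmax ∧ ∃ s2t s2tt, C2inT s2 s2t s2tt T xmin xmax)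
    (hbcoef : BddOn2 b T xmin xmax ∧ ∃ bt btt, C2inT b bt btt T xmin xmax)
    (hrcoef : BddOn2 r T xmin xmax ∧ ∃ rt rtt, C2inT r rt rtt T xmin xmax)
    -- φ and f are C² in t with bounded derivatives
    (hφ : ∃ φt φtt, C2inT φ φt φtt T xmin xmax)
    (hf : ∃ ft ftt, C2inT f ft ftt T xmin xmax)
    -- v is a classical solution of the obstacle equation on (0,T) × Ω
    (hPDE : ∀ t ∈ Ioo (0:ℝ) T, ∀ x ∈ Ioo xmin xmax,
      min (vt t x + (-(1/2) * s2 t x * vxx t x + b t x * vx t x + r t x * v t x)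
            - f t x)
          (v t x - φ t x - f t x) = 0) :
    ∃ C : ℝ, 0 ≤ C ∧
      ∀ τ h t x : ℝ, 0 < τ → 0 < h →
        Icc t (t + τ) ⊆ Icc (0:ℝ) T → Icc (x - h) (x + h) ⊆ Icc xmin xmax →
        |min ((v (t + τ) x - v t x) / τ
              + (1/2) * Ah s2 b r v h (t + τ) x + (1/2) * Ah s2 b r v h t x
              - f (t + τ/2) x)
             (v (t + τ) x - φ (t + τ) x - f (t + τ) x)|
          ≤ C * (τ^2 + h^2) := by
  classical
  -- unpack hypotheses
  obtain ⟨hcvt, hcvtt, hcvttt, hcvx, hcvxx, hcvx3, hcvx4⟩ := hcont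
  obtain ⟨hbvt, hbvtt, hbvttt, hbvx, hbvxx, hbvx3, hbvx4⟩ := hbdd
  obtain ⟨hs2b, s2t, s2tt, hs2C⟩ := hs2
  obtain ⟨hbb, bt, btt, hbC⟩ := hbcoef
  obtain ⟨hrb, rt, rtt, hrC⟩ := hrcoef
  obtain ⟨φt, φtt, hφC⟩ := hφ
  obtain ⟨ft, ftt, hfC⟩ := hf
  obtain ⟨Mvtt, hMvtt0, hMvtt⟩ := bdd_nonneg hbvtt
  obtain ⟨Mvttt, hMvttt0, hMvttt⟩ := bdd_nonneg hbvttt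
  obtain ⟨Mvx3, hMvx30, hMvx3⟩ := bdd_nonneg hbvx3
  obtain ⟨Mvx4, hMvx40, hMvx4⟩ := bdd_nonneg hbvx4
  obtain ⟨Ms2, hMs20, hMs2⟩ := bdd_nonneg hs2b
  obtain ⟨Mb, hMb0, hMb⟩ := bdd_nonneg hbb
  obtain ⟨Mφtt, hMφtt0, hMφtt⟩ := bdd_nonneg hφC.2.2.2.2
  obtain ⟨Mftt, hMftt0, hMftt⟩ := bdd_nonneg hfC.2.2.2.2
  set C1 : ℝ := Mvttt + Mftt with hC1def
  set C2 : ℝ := Ms2 * Mvx4 + 2 * Mb * Mvx3 with hC2def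
  set MB : ℝ := Mvtt + Mφtt + Mftt with hMBdef
  clear_value C1 C2 MB
  have hC10 : 0 ≤ C1 := by rw [hC1def]; linarith
  have hC20 : 0 ≤ C2 := by
    rw [hC2def]
    nlinarith [mul_nonneg hMs20 hMvx40, mul_nonneg hMb0 hMvx30]
  have hMB0 : 0 ≤ MB := by rw [hMBdef]; linarith
  refine ⟨C1 + C2 + MB, by linarith, ?_⟩
  intro τ h t x hτ hh htT hxX
  have ht0 : 0 ≤ t := (htT (left_mem_Icc.2 (by linarith))).1
  have htτT : t + τ ≤ T := (htT (right_mem_Icc.2 (by linarith))).2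
  have hxm : xmin ≤ x - h := (hxX (left_mem_Icc.2 (by linarith))).1
  have hxM : x + h ≤ xmax := (hxX (right_mem_Icc.2 (by linarith))).2
  have hxmem : x ∈ Icc xmin xmax := ⟨by linarith, by linarith⟩
  have hxIoo : x ∈ Ioo xmin xmax := ⟨by linarith, by linarith⟩
  have htmem : t ∈ Icc (0:ℝ) T := ⟨ht0, by linarith⟩
  have htτmem : t + τ ∈ Icc (0:ℝ) T := ⟨by linarith, htτT⟩
  set α : ℝ → ℝ := fun s => vt s x +
      (-(1/2) * s2 s x * vxx s x + b s x * vx s x + r s x * v s x) - f s x with hαdef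
  set β : ℝ → ℝ := fun s => v s x - φ s x - f s x with hβdef
  clear_value α β
  -- the obstacle equation along the segment
  have hmino : ∀ s ∈ Ioo t (t + τ), min (α s) (β s) = 0 := by
    intro s hs
    simp only [hαdef, hβdef]
    exact hPDE s ⟨lt_of_le_of_lt ht0 hs.1, lt_of_lt_of_le hs.2 htτT⟩ x hxIoo
  -- continuity of α and β in time
  have cvt : ContinuousOn (fun s => vt s x) (Icc (0:ℝ) T) := hcvt.slice hxmem
  have cvx : ContinuousOn (fun s => vx s x) (Icc (0:ℝ) T) := hcvx.slice hxmem
  have cvxx : ContinuousOn (fun s => vxx s x) (Icc (0:ℝ) T) := hcvxx.slice hxmem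
  have cv : ContinuousOn (fun s => v s x) (Icc (0:ℝ) T) :=
    fun s hs => (hvt x hxmem s hs).continuousWithinAt
  have cs2 : ContinuousOn (fun s => s2 s x) (Icc (0:ℝ) T) :=
    fun s hs => (hs2C.1 x hxmem s hs).1.continuousWithinAt
  have cb : ContinuousOn (fun s => b s x) (Icc (0:ℝ) T) :=
    fun s hs => (hbC.1 x hxmem s hs).1.continuousWithinAt
  have cr : ContinuousOn (fun s => r s x) (Icc (0:ℝ) T) :=
    fun s hs => (hrC.1 x hxmem s hs).1.continuousWithinAt
  have cφ : ContinuousOn (fun s => φ s x) (Icc (0:ℝ) T) :=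
    fun s hs => (hφC.1 x hxmem s hs).1.continuousWithinAt
  have cf : ContinuousOn (fun s => f s x) (Icc (0:ℝ) T) :=
    fun s hs => (hfC.1 x hxmem s hs).1.continuousWithinAt
  have hαc : ContinuousOn α (Icc (0:ℝ) T) := by
    rw [hαdef]
    exact (cvt.add ((((continuousOn_const.mul cs2).mul cvxx).add (cb.mul cvx)).add
      (cr.mul cv))).sub cf
  have hβc : ContinuousOn β (Icc (0:ℝ) T) := by
    rw [hβdef]
    exact (cv.sub cφ).sub cf
  have httτ : t < t + τ := by linarith
  -- obstacle equation at the endpoints, by continuity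
  obtain ⟨hmt, hmtτ⟩ := endpoint_eq httτ
    (((hαc.mono htT).inf (hβc.mono htT)) :
      ContinuousOn (fun s => min (α s) (β s)) (Icc t (t + τ))) hmino
  have hαt0 : 0 ≤ α t := by
    have := min_le_left (α t) (β t); linarith
  have hατ0 : 0 ≤ α (t + τ) := by
    have := min_le_left (α (t + τ)) (β (t + τ)); linarith
  have hβτ0 : 0 ≤ β (t + τ) := by
    have := min_le_right (α (t + τ)) (β (t + τ)); linarith
  -- consistency estimates
  have hE1 : |(v (t + τ) x - v t x) / τ - (vt t x + vt (t + τ) x) / 2| ≤ Mvttt * τ ^ 2 :=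
    E1_est hτ hMvttt0
      (fun s hs => (hvt x hxmem s (htT hs)).mono htT)
      (fun s hs => (hvtt x hxmem s (htT hs)).mono htT)
      (fun s hs => (hvttt x hxmem s (htT hs)).mono htT)
      (fun s hs => hMvttt s (htT hs) x hxmem)
  have hE2 : |f (t + τ / 2) x - (f t x + f (t + τ) x) / 2| ≤ Mftt * τ ^ 2 :=
    E2_est hτ hMftt0
      (fun s hs => ((hfC.1 x hxmem s (htT hs)).1).mono htT)
      (fun s hs => ((hfC.1 x hxmem s (htT hs)).2).mono htT)
      (fun s hs => hMftt s (htT hs) x hxmem)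
  have hspace : ∀ s, s ∈ Icc (0:ℝ) T →
      |Ah s2 b r v h s x -
        (-(1/2) * s2 s x * vxx s x + b s x * vx s x + r s x * v s x)| ≤ C2 * h ^ 2 := by
    intro s hsT
    have hD2 : |(-(v s (x - h)) + 2 * v s x - v s (x + h)) / h ^ 2 + vxx s x|
        ≤ 2 * Mvx4 * h ^ 2 :=
      D2_est hh hMvx40
        (fun y hy => (hvx s hsT y (hxX hy)).mono hxX)
        (fun y hy => (hvxx s hsT y (hxX hy)).mono hxX)
        (fun y hy => (hvx3 s hsT y (hxX hy)).mono hxX)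
        (fun y hy => (hvx4 s hsT y (hxX hy)).mono hxX)
        (fun y hy => hMvx4 s hsT y (hxX hy))
    have hD1 : |(v s (x + h) - v s (x - h)) / (2 * h) - vx s x| ≤ 2 * Mvx3 * h ^ 2 :=
      D1_est hh hMvx30
        (fun y hy => (hvx s hsT y (hxX hy)).mono hxX)
        (fun y hy => (hvxx s hsT y (hxX hy)).mono hxX)
        (fun y hy => (hvx3 s hsT y (hxX hy)).mono hxX)
        (fun y hy => hMvx3 s hsT y (hxX hy))
    have key : Ah s2 b r v h s x -
        (-(1/2) * s2 s x * vxx s x + b s x * vx s x + r s x * v s x)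
        = 1/2 * s2 s x * ((-(v s (x - h)) + 2 * v s x - v s (x + h)) / h ^ 2 + vxx s x)
          + b s x * ((v s (x + h) - v s (x - h)) / (2 * h) - vx s x) := by
      simp only [Ah]
      ring
    rw [key]
    have b1 : |1/2 * s2 s x * ((-(v s (x - h)) + 2 * v s x - v s (x + h)) / h ^ 2 + vxx s x)|
        ≤ 1/2 * Ms2 * (2 * Mvx4 * h ^ 2) :=
      abs_mul_le (abs_mul_le (by rw [abs_of_nonneg] <;> norm_num : |(1:ℝ)/2| ≤ 1/2) (hMs2 s hsT x hxmem)) hD2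
    have b2 : |b s x * ((v s (x + h) - v s (x - h)) / (2 * h) - vx s x)|
        ≤ Mb * (2 * Mvx3 * h ^ 2) :=
      abs_mul_le (hMb s hsT x hxmem) hD1
    calc |1/2 * s2 s x * ((-(v s (x - h)) + 2 * v s x - v s (x + h)) / h ^ 2 + vxx s x)
          + b s x * ((v s (x + h) - v s (x - h)) / (2 * h) - vx s x)|
        ≤ |1/2 * s2 s x * ((-(v s (x - h)) + 2 * v s x - v s (x + h)) / h ^ 2 + vxx s x)|
          + |b s x * ((v s (x + h) - v s (x - h)) / (2 * h) - vx s x)| := abs_add_le _ _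
      _ ≤ 1/2 * Ms2 * (2 * Mvx4 * h ^ 2) + Mb * (2 * Mvx3 * h ^ 2) := add_le_add b1 b2
      _ = C2 * h ^ 2 := by rw [hC2def]; ring
  -- the full consistency bound for the first argument of the min
  have hcons : |((v (t + τ) x - v t x) / τ
      + 1/2 * Ah s2 b r v h (t + τ) x + 1/2 * Ah s2 b r v h t x
      - f (t + τ/2) x) - (α t + α (t + τ)) / 2| ≤ C1 * τ ^ 2 + C2 * h ^ 2 := by
    have key : ((v (t + τ) x - v t x) / τ
        + 1/2 * Ah s2 b r v h (t + τ) x + 1/2 * Ah s2 b r v h t x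
        - f (t + τ/2) x) - (α t + α (t + τ)) / 2
        = ((v (t + τ) x - v t x) / τ - (vt t x + vt (t + τ) x) / 2)
          + 1/2 * (Ah s2 b r v h (t + τ) x -
            (-(1/2) * s2 (t + τ) x * vxx (t + τ) x + b (t + τ) x * vx (t + τ) x
              + r (t + τ) x * v (t + τ) x))
          + 1/2 * (Ah s2 b r v h t x -
            (-(1/2) * s2 t x * vxx t x + b t x * vx t x + r t x * v t x))
          + (f (t + τ / 2) x - (f t x + f (t + τ) x) / 2) * (-1) := by
      simp only [hαdef]
      ring
    rw [key]
    have b1 : |1/2 * (Ah s2 b r v h (t + τ) x -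
        (-(1/2) * s2 (t + τ) x * vxx (t + τ) x + b (t + τ) x * vx (t + τ) x
          + r (t + τ) x * v (t + τ) x))| ≤ 1/2 * (C2 * h ^ 2) :=
      abs_mul_le (by rw [abs_of_nonneg] <;> norm_num : |(1:ℝ)/2| ≤ 1/2) (hspace (t + τ) htτmem)
    have b2 : |1/2 * (Ah s2 b r v h t x -
        (-(1/2) * s2 t x * vxx t x + b t x * vx t x + r t x * v t x))|
        ≤ 1/2 * (C2 * h ^ 2) :=
      abs_mul_le (by rw [abs_of_nonneg] <;> norm_num : |(1:ℝ)/2| ≤ 1/2) (hspace t htmem)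
    have b3 : |(f (t + τ / 2) x - (f t x + f (t + τ) x) / 2) * (-1)| ≤ Mftt * τ ^ 2 * 1 :=
      abs_mul_le hE2 (by rw [abs_neg, abs_of_nonneg] <;> norm_num : |(-1:ℝ)| ≤ 1)
    have tri1 := abs_add_le (((v (t + τ) x - v t x) / τ - (vt t x + vt (t + τ) x) / 2)
          + 1/2 * (Ah s2 b r v h (t + τ) x -
            (-(1/2) * s2 (t + τ) x * vxx (t + τ) x + b (t + τ) x * vx (t + τ) x
              + r (t + τ) x * v (t + τ) x))
          + 1/2 * (Ah s2 b r v h t x -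
            (-(1/2) * s2 t x * vxx t x + b t x * vx t x + r t x * v t x)))
        ((f (t + τ / 2) x - (f t x + f (t + τ) x) / 2) * (-1))
    have tri2 := abs_add_le (((v (t + τ) x - v t x) / τ - (vt t x + vt (t + τ) x) / 2)
          + 1/2 * (Ah s2 b r v h (t + τ) x -
            (-(1/2) * s2 (t + τ) x * vxx (t + τ) x + b (t + τ) x * vx (t + τ) x
              + r (t + τ) x * v (t + τ) x)))
        (1/2 * (Ah s2 b r v h t x -
            (-(1/2) * s2 t x * vxx t x + b t x * vx t x + r t x * v t x)))
    have tri3 := abs_add_le ((v (t + τ) x - v t x) / τ - (vt t x + vt (t + τ) x) / 2)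
        (1/2 * (Ah s2 b r v h (t + τ) x -
            (-(1/2) * s2 (t + τ) x * vxx (t + τ) x + b (t + τ) x * vx (t + τ) x
              + r (t + τ) x * v (t + τ) x)))
    rw [hC1def]
    linarith
  obtain ⟨habs1, habs2⟩ := abs_le.1 hcons
  -- bounds relating the constants to C (τ² + h²)
  have hsq : 0 ≤ τ ^ 2 := sq_nonneg τ
  have hsqh : 0 ≤ h ^ 2 := sq_nonneg h
  have hεle : C1 * τ ^ 2 + C2 * h ^ 2 ≤ (C1 + C2 + MB) * (τ ^ 2 + h ^ 2) := by
    nlinarith [mul_nonneg hC10 hsqh, mul_nonneg hC20 hsq, mul_nonneg hMB0 hsq,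
      mul_nonneg hMB0 hsqh]
  have hε0 : 0 ≤ C1 * τ ^ 2 + C2 * h ^ 2 := by
    nlinarith [mul_nonneg hC10 hsq, mul_nonneg hC20 hsqh]
  rw [abs_le]
  constructor
  · -- lower bound
    refine le_min ?_ ?_
    · linarith only [habs1, hαt0, hατ0, hεle]
    · have h2 : 0 ≤ v (t + τ) x - φ (t + τ) x - f (t + τ) x := by
        simp only [hβdef] at hβτ0
        exact hβτ0
      linarith only [h2, hε0, hεle]
  · -- upper bound
    by_cases hcase : v (t + τ) x - φ (t + τ) x - f (t + τ) x ≤ MB / 2 * τ ^ 2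
    · refine le_trans (min_le_right _ _) ?_
      have : MB / 2 * τ ^ 2 ≤ (C1 + C2 + MB) * (τ ^ 2 + h ^ 2) := by
        nlinarith [mul_nonneg hC10 hsq, mul_nonneg hC10 hsqh, mul_nonneg hC20 hsq,
          mul_nonneg hC20 hsqh, mul_nonneg hMB0 hsq, mul_nonneg hMB0 hsqh]
      linarith only [hcase, this]
    · push_neg at hcase
      have hcase' : MB / 2 * τ ^ 2 < β (t + τ) := by
        simp only [hβdef]
        exact hcase
      -- β is strictly positive on the open interval
      have hβpos : ∀ s ∈ Ioo t (t + τ), 0 < β s := by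
        intro s hs
        by_contra hle
        push_neg at hle
        have hsIoo : s ∈ Ioo (0:ℝ) T := ⟨lt_of_le_of_lt ht0 hs.1, lt_of_lt_of_le hs.2 htτT⟩
        have hsIcc : s ∈ Icc (0:ℝ) T := ⟨hsIoo.1.le, hsIoo.2.le⟩
        have hβs0 : β s = 0 := by
          have := min_le_right (α s) (β s)
          have hm := hmino s hs
          linarith
        have hloc : IsLocalMin β s := by
          have hnb : Ioo t (t + τ) ∈ 𝓝 s := isOpen_Ioo.mem_nhds hs
          filter_upwards [hnb] with u hu
          rw [hβs0]
          have := min_le_right (α u) (β u)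
          have hm := hmino u hu
          linarith
        have hder : HasDerivAt β (vt s x - φt s x - ft s x) s := by
          have h1 : HasDerivWithinAt β (vt s x - φt s x - ft s x) (Icc (0:ℝ) T) s := by
            rw [hβdef]
            exact ((hvt x hxmem s hsIcc).sub ((hφC.1 x hxmem s hsIcc).1)).sub
              ((hfC.1 x hxmem s hsIcc).1)
          exact h1.hasDerivAt (Icc_mem_nhds hsIoo.1 hsIoo.2)
        have hder0 : vt s x - φt s x - ft s x = 0 := hloc.hasDerivAt_eq_zero hder
        have hsub2 : Icc s (t + τ) ⊆ Icc (0:ℝ) T := Icc_subset_Icc hsIoo.1.le htτT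
        have hβd : ∀ u ∈ Icc s (t + τ),
            HasDerivWithinAt β (vt u x - φt u x - ft u x) (Icc s (t + τ)) u := by
          intro u hu
          have h1 : HasDerivWithinAt β (vt u x - φt u x - ft u x) (Icc (0:ℝ) T) u := by
            rw [hβdef]
            exact ((hvt x hxmem u (hsub2 hu)).sub ((hφC.1 x hxmem u (hsub2 hu)).1)).sub
              ((hfC.1 x hxmem u (hsub2 hu)).1)
          exact h1.mono hsub2
        have hβd2 : ∀ u ∈ Icc s (t + τ),
            HasDerivWithinAt (fun w => vt w x - φt w x - ft w x)
              (vtt u x - φtt u x - ftt u x) (Icc s (t + τ)) u := by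
          intro u hu
          exact (((hvtt x hxmem u (hsub2 hu)).sub ((hφC.1 x hxmem u (hsub2 hu)).2)).sub
            ((hfC.1 x hxmem u (hsub2 hu)).2)).mono hsub2
        have hβbd : ∀ u ∈ Icc s (t + τ), |vtt u x - φtt u x - ftt u x| ≤ MB := by
          intro u hu
          have b1 := hMvtt u (hsub2 hu) x hxmem
          have b2 := hMφtt u (hsub2 hu) x hxmem
          have b3 := hMftt u (hsub2 hu) x hxmem
          have t1 := abs_sub (vtt u x - φtt u x) (ftt u x)
          have t2 := abs_sub (vtt u x) (φtt u x)
          rw [hMBdef]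
          linarith
        have T1 := taylor1_bound hs.2.le hMB0 hβd hβd2 hβbd
        rw [hβs0, hder0] at T1
        obtain ⟨habsa, habsb⟩ := abs_le.1 T1
        have hle2 : t + τ - s ≤ τ := by linarith [hs.1]
        have hge2 : 0 ≤ t + τ - s := by linarith [hs.2.le]
        have hsq2 : (t + τ - s) ^ 2 ≤ τ ^ 2 := by nlinarith
        have hmul : MB / 2 * (t + τ - s) ^ 2 ≤ MB / 2 * τ ^ 2 := by nlinarith
        linarith only [habsb, hmul, hcase']
      -- hence the PDE part vanishes on the open interval, and at the endpoints
      have hα0 : ∀ s ∈ Ioo t (t + τ), α s = 0 := by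
        intro s hs
        rcases min_eq_iff.1 (hmino s hs) with ⟨h1, _⟩ | ⟨h1, h2⟩
        · exact h1
        · exact absurd h1 (by linarith [hβpos s hs])
      obtain ⟨hαt, hατ⟩ := endpoint_eq httτ (hαc.mono htT) hα0
      refine le_trans (min_le_left _ _) ?_
      rw [hαt, hατ] at habs2
      linarith only [habs2, hεle]
end

section
/- Let J ≥ 1, h > 0, η₀ > 0, L ≥ 0, M_b ≥ 0, M_r ≥ 0. Let a_1,…,a_J, b_1,…,b_J, r_1,…,r_J ∈ ℝ satisfy a_i ≥ η₀ for all i, |a_i − a_{i−1}| ≤ L h for 2 ≤ i ≤ J, |b_i| ≤ M_b and |r_i| ≤ M_r for all i. Let A be the J×J tridiagonal matrix A = (1/h²)·tridiag(−a_i, 2a_i, −a_i) + (1/(2h))·tridiag(−b_i, 0, b_i) + diag(r_i), i.e., A_{i,i−1} = −a_i/h² − b_i/(2h), A_{i,i} = 2a_i/h² + r_i, A_{i,i+1} = −a_i/h² + b_i/(2h). Then with η := η₀/2 there exists a constant γ ≥ 0 depending only on η₀, L, M_b, M_r (not on J, h) such that for all e ∈ ℝ^J: ⟨e, A e⟩ ≥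 η · N(e/h)² − γ · ‖e‖₂², where N(x)² := Σ_{i=1}^{J+1} (x_i − x_{i−1})² with the convention x_0 = x_{J+1} = 0. -/
/-- Extension of a vector `x ∈ ℝ^J` (1-based components `x_1,…,x_J`) by zero:
`x_0 = x_{J+1} = 0` (and `0` outside). -/
noncomputable def extz (J : ℕ) (x : Fin J → ℝ) (k : ℕ) : ℝ :=
  if hk : 1 ≤ k ∧ k ≤ J then x ⟨k - 1, by omega⟩ else 0

/-- Square of the discrete gradient seminorm
`N(x)² = Σ_{i=1}^{J+1} (x_i − x_{i−1})²` with `x_0 = x_{J+1} = 0`. -/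
noncomputable def Nsq (J : ℕ) (x : Fin J → ℝ) : ℝ :=
  ∑ i ∈ Finset.Icc 1 (J + 1), (extz J x i - extz J x (i - 1))^2


lemma amgm_aux (ε M c x y : ℝ) (hε : 0 < ε) (hc : |c| ≤ M) :
    -(ε*x^2) - (M^2/(4*ε))*y^2 ≤ c*(y*x) := by
  have h1 := abs_le.1 hc
  have h4 : (0:ℝ) < 4*ε := by linarith
  have key : -(ε*x^2)*(4*ε) - M^2*y^2 ≤ c*(y*x)*(4*ε) := by
    nlinarith [sq_nonneg (2*ε*x + c*y), mul_nonneg (by linarith : (0:ℝ) ≤ M - c) (by linarith : (0:ℝ) ≤ M + c), sq_nonneg y]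
  calc -(ε*x^2) - (M^2/(4*ε))*y^2 = (-(ε*x^2)*(4*ε) - M^2*y^2)/(4*ε) := by field_simp
    _ ≤ c*(y*x)*(4*ε)/(4*ε) := by gcongr
    _ = c*(y*x) := by field_simp

lemma coercive_pointwise (η₀ L Mb h α α' β1 β2 u v : ℝ)
    (hη : 0 < η₀) (hL : 0 ≤ L) (hMb : 0 ≤ Mb) (hh : 0 < h)
    (hα : η₀ ≤ α) (hδ : |α - α'| ≤ L * h) (hβ1 : |β1| ≤ Mb) (hβ2 : |β2| ≤ Mb) :
    (η₀/2) * ((v - u)/h)^2 - (2*L^2/η₀ + Mb^2/(2*η₀)) * u^2 - (Mb^2/(2*η₀)) * v^2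
      ≤ (α*v - α'*u) * (v - u) / h^2 + (β1*u + β2*v) * (v - u) / (2*h) := by
  have hh' : h ≠ 0 := ne_of_gt hh
  set t : ℝ := (v - u)/h with ht
  have hRHS : (α*v - α'*u) * (v - u) / h^2 + (β1*u + β2*v) * (v - u) / (2*h)
      = α*t^2 + ((α - α')/h)*(u*t) + (β1/2)*(u*t) + (β2/2)*(v*t) := by
    rw [ht]; field_simp; ring
  rw [hRHS]
  set c := (α - α')/h with hc
  have hcL : |c| ≤ L := by
    rw [hc, abs_div, abs_of_pos hh]
    exact (div_le_iff₀ hh).2 (by linarith [hδ])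
  have k1 : -((η₀/8)*t^2) - (2*L^2/η₀)*u^2 ≤ c*(u*t) := by
    have := amgm_aux (η₀/8) L c t u (by positivity) hcL
    have heq : L^2/(4*(η₀/8)) = 2*L^2/η₀ := by field_simp; ring
    rw [heq] at this; exact this
  have k2 : -((η₀/8)*t^2) - (Mb^2/(2*η₀))*u^2 ≤ (β1/2)*(u*t) := by
    have hb : |β1/2| ≤ Mb/2 := by rw [abs_div, abs_two]; linarith [abs_le.1 hβ1, abs_nonneg β1, (div_le_div_iff_of_pos_right (c:=2) (by norm_num)).2 (le_refl (0:ℝ))]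
    have := amgm_aux (η₀/8) (Mb/2) (β1/2) t u (by positivity) hb
    have heq : (Mb/2)^2/(4*(η₀/8)) = Mb^2/(2*η₀) := by field_simp; ring
    rw [heq] at this; exact this
  have k3 : -((η₀/8)*t^2) - (Mb^2/(2*η₀))*v^2 ≤ (β2/2)*(v*t) := by
    have hb : |β2/2| ≤ Mb/2 := by rw [abs_div, abs_two]; linarith [abs_le.1 hβ2, abs_nonneg β2]
    have := amgm_aux (η₀/8) (Mb/2) (β2/2) t v (by positivity) hb
    have heq : (Mb/2)^2/(4*(η₀/8)) = Mb^2/(2*η₀) := by field_simp; ring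
    rw [heq] at this; exact this
  have hαt : η₀*t^2 ≤ α*t^2 := by nlinarith [sq_nonneg t]
  have ht2 : 0 ≤ η₀ * t^2 := by positivity
  linarith

/-- Coercivity of the centered finite-difference matrix `A`
for `𝒜u = −a u_xx + b u_x + r u`: with `η = η₀/2` there is a constant `γ ≥ 0`
depending only on `η₀, L, M_b, M_r` such that
`⟨e, Ae⟩ ≥ η N(e/h)² − γ ‖e‖₂²` for all `e ∈ ℝ^J`. -/
theorem fd_matrix_coercivity
    (η₀ L Mb Mr : ℝ) (hη : 0 < η₀) (hL : 0 ≤ L) (hMb : 0 ≤ Mb) (hMr : 0 ≤ Mr) :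
    ∃ γ : ℝ, 0 ≤ γ ∧
      ∀ (J : ℕ), 1 ≤ J → ∀ (h : ℝ), 0 < h →
      ∀ a b r : Fin J → ℝ,
        (∀ i, η₀ ≤ a i) →
        (∀ i j : Fin J, (i : ℕ) + 1 = (j : ℕ) → |a j - a i| ≤ L * h) →
        (∀ i, |b i| ≤ Mb) → (∀ i, |r i| ≤ Mr) →
      ∀ A : Matrix (Fin J) (Fin J) ℝ,
        (∀ i j : Fin J, A i j =
          if i = j then 2 * a i / h^2 + r i
          else if (i : ℕ) + 1 = (j : ℕ) then -(a i) / h^2 + b i / (2*h)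
          else if (j : ℕ) + 1 = (i : ℕ) then -(a i) / h^2 - b i / (2*h)
          else 0) →
      ∀ e : Fin J → ℝ,
        (η₀ / 2) * Nsq J (fun i => e i / h) - γ * ∑ i, (e i)^2
          ≤ ∑ i, e i * A.mulVec e i := by
  refine ⟨2*L^2/η₀ + Mb^2/η₀ + Mr, by positivity, ?_⟩
  intro J hJ h hh a b r ha haL hb hr A hA e
  set E : ℕ → ℝ := extz J e with hE
  set Aa : ℕ → ℝ := (fun m => a ⟨min (m-1) (J-1), by omega⟩) with hAadef
  set Bb : ℕ → ℝ := (fun m => b ⟨min (m-1) (J-1), by omega⟩) with hBbdef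
  set Rr : ℕ → ℝ := (fun m => r ⟨min (m-1) (J-1), by omega⟩) with hRrdef
  have aidx : ∀ (m n : ℕ) (pm : m < J) (pn : n < J), m = n → a ⟨m,pm⟩ = a ⟨n,pn⟩ := by
    intro m n pm pn hmn; subst hmn; rfl
  have eidx : ∀ (m n : ℕ) (pm : m < J) (pn : n < J), m = n → e ⟨m,pm⟩ = e ⟨n,pn⟩ := by
    intro m n pm pn hmn; subst hmn; rfl
  have hE0 : E 0 = 0 := by rw [hE]; unfold extz; rw [dif_neg (by omega)]
  have hEtop : ∀ m, J + 1 ≤ m → E m = 0 := by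
    intro m hm; rw [hE]; unfold extz; rw [dif_neg (by omega)]
  have hEe : ∀ (k : ℕ) (hk : k < J), E (k+1) = e ⟨k, hk⟩ := by
    intro k hk; rw [hE]; unfold extz; rw [dif_pos ⟨by omega, by omega⟩]
    exact eidx _ _ _ _ (by omega)
  have hAa1 : ∀ (k : ℕ) (hk : k < J), Aa (k+1) = a ⟨k, hk⟩ := by
    intro k hk; rw [hAadef]; try exact aidx _ _ _ _ (by omega)
  have hAaη : ∀ m, η₀ ≤ Aa m := by intro m; rw [hAadef]; exact ha _
  have hBbM : ∀ m, |Bb m| ≤ Mb := by intro m; rw [hBbdef]; exact hb _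
  have hRrM : ∀ m, |Rr m| ≤ Mr := by intro m; rw [hRrdef]; exact hr _
  have hAaL : ∀ k, k ≤ J → |Aa (k+1) - Aa k| ≤ L * h := by
    intro k hk
    rcases Nat.eq_zero_or_pos k with rfl | hk0
    · have h01 : Aa (0+1) = Aa 0 := by rw [hAadef]; try exact aidx _ _ _ _ (by omega)
      rw [h01, sub_self, abs_zero]; positivity
    · rcases eq_or_lt_of_le hk with rfl | hkJ
      · have h01 : Aa (k+1) = Aa k := by rw [hAadef]; try exact aidx _ _ _ _ (by omega)
        rw [h01, sub_self, abs_zero]; positivity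
      · have h1 : Aa (k+1) = a ⟨k, hkJ⟩ := hAa1 k hkJ
        have h2 : Aa k = a ⟨k-1, by omega⟩ := by rw [hAadef]; try exact aidx _ _ _ _ (by omega)
        rw [h1, h2]; exact haL ⟨k-1, by omega⟩ ⟨k, hkJ⟩ (show k-1+1 = k by omega)
  have hplus : ∀ k : ℕ, k+1+1 = k+2 := fun k => rfl
  have hmv : ∀ i : Fin J, A.mulVec e i =
      (2*a i/h^2 + r i) * e i
      + (-(a i)/h^2 + b i/(2*h)) * E ((i:ℕ)+2)
      + (-(a i)/h^2 - b i/(2*h)) * E (i:ℕ) := by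
    intro i
    have hsplit : ∀ j : Fin J, A i j * e j =
        (if i = j then (2*a i/h^2 + r i) * e j else 0)
        + (if (i:ℕ)+1 = (j:ℕ) then (-(a i)/h^2 + b i/(2*h)) * e j else 0)
        + (if (j:ℕ)+1 = (i:ℕ) then (-(a i)/h^2 - b i/(2*h)) * e j else 0) := by
      intro j
      rw [hA i j]
      by_cases h1 : i = j
      · have h1' : (i:ℕ) = (j:ℕ) := by rw [h1]
        rw [if_pos h1, if_pos h1, if_neg (by omega), if_neg (by omega)]; ring
      · have h1' : (i:ℕ) ≠ (j:ℕ) := fun hc => h1 (Fin.ext hc)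
        rw [if_neg h1, if_neg h1]
        by_cases h2 : (i:ℕ)+1 = (j:ℕ)
        · rw [if_pos h2, if_pos h2, if_neg (by omega)]; ring
        · rw [if_neg h2, if_neg h2]
          by_cases h3 : (j:ℕ)+1 = (i:ℕ)
          · rw [if_pos h3, if_pos h3]; ring
          · rw [if_neg h3, if_neg h3]; ring
    have hmv0 : A.mulVec e i = ∑ j, A i j * e j := rfl
    have S1 : ∑ j : Fin J, (if i = j then (2*a i/h^2 + r i) * e j else 0)
        = (2*a i/h^2 + r i) * e i := by
      rw [Finset.sum_ite_eq Finset.univ i (fun j => (2*a i/h^2 + r i) * e j)]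
      simp
    have S2 : ∑ j : Fin J, (if (i:ℕ)+1 = (j:ℕ) then (-(a i)/h^2 + b i/(2*h)) * e j else 0)
        = (-(a i)/h^2 + b i/(2*h)) * E ((i:ℕ)+2) := by
      by_cases hi : (i:ℕ)+1 < J
      · rw [Finset.sum_eq_single (⟨(i:ℕ)+1, hi⟩ : Fin J)]
        · have hE2 : E ((i:ℕ)+2) = e ⟨(i:ℕ)+1, hi⟩ := by
            rw [show (i:ℕ)+2 = ((i:ℕ)+1)+1 from rfl]; exact hEe _ hi
          rw [if_pos rfl, hE2]
        · intro j _ hj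
          exact if_neg (fun hc => hj (Fin.ext hc.symm))
        · intro hmem; exact absurd (Finset.mem_univ _) hmem
      · rw [Finset.sum_eq_zero (fun j _ => if_neg (fun hc => hi (by rw [hc]; exact j.isLt))),
            hEtop ((i:ℕ)+2) (by omega), mul_zero]
    have S3 : ∑ j : Fin J, (if (j:ℕ)+1 = (i:ℕ) then (-(a i)/h^2 - b i/(2*h)) * e j else 0)
        = (-(a i)/h^2 - b i/(2*h)) * E (i:ℕ) := by
      by_cases hi : 0 < (i:ℕ)
      · rw [Finset.sum_eq_single (⟨(i:ℕ)-1, by omega⟩ : Fin J)]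
        · have hEi : E (i:ℕ) = e ⟨(i:ℕ)-1, by omega⟩ :=
            (congrArg E (by omega : (i:ℕ) = (i:ℕ)-1+1)).trans (hEe _ (by omega))
          rw [if_pos (show (i:ℕ)-1+1 = (i:ℕ) by omega), hEi]
        · intro j _ hj
          exact if_neg (fun hc => hj (Fin.ext (show (j:ℕ) = (i:ℕ)-1 by omega)))
        · intro hmem; exact absurd (Finset.mem_univ _) hmem
      · rw [Finset.sum_eq_zero (fun j _ => if_neg (by omega)),
            show E (i:ℕ) = 0 from by rw [show (i:ℕ) = 0 by omega]; exact hE0, mul_zero]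
    calc A.mulVec e i = ∑ j, A i j * e j := hmv0
      _ = ∑ j : Fin J, ((if i = j then (2*a i/h^2 + r i) * e j else 0)
            + (if (i:ℕ)+1 = (j:ℕ) then (-(a i)/h^2 + b i/(2*h)) * e j else 0)
            + (if (j:ℕ)+1 = (i:ℕ) then (-(a i)/h^2 - b i/(2*h)) * e j else 0)) :=
          Finset.sum_congr rfl (fun j _ => hsplit j)
      _ = _ := by rw [Finset.sum_add_distrib, Finset.sum_add_distrib, S1, S2, S3]
  -- hBb1 / hRr1 analogues
  have hBb1 : ∀ (k : ℕ) (hk : k < J), Bb (k+1) = b ⟨k, hk⟩ := by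
    intro k hk; rw [hBbdef]
    exact (by intro m n pm pn hmn; subst hmn; rfl :
      ∀ (m n : ℕ) (pm : m < J) (pn : n < J), m = n → b ⟨m,pm⟩ = b ⟨n,pn⟩) _ _ _ _ (by omega)
  have hRr1 : ∀ (k : ℕ) (hk : k < J), Rr (k+1) = r ⟨k, hk⟩ := by
    intro k hk; rw [hRrdef]
    exact (by intro m n pm pn hmn; subst hmn; rfl :
      ∀ (m n : ℕ) (pm : m < J) (pn : n < J), m = n → r ⟨m,pm⟩ = r ⟨n,pn⟩) _ _ _ _ (by omega)
  -- Step B: the quadratic form as a sum over ℕ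
  set Q : ℕ → ℝ := fun k => (2*Aa (k+1)/h^2 + Rr (k+1)) * E (k+1)^2
      + (-(Aa (k+1))/h^2 + Bb (k+1)/(2*h)) * (E (k+1) * E (k+2))
      + (-(Aa (k+1))/h^2 - Bb (k+1)/(2*h)) * (E (k+1) * E k) with hQdef
  have hQ : ∑ i, e i * A.mulVec e i = ∑ k ∈ Finset.range J, Q k := by
    rw [← Fin.sum_univ_eq_sum_range Q J]
    apply Finset.sum_congr rfl
    intro i _
    rw [hmv i]
    simp only [hQdef]
    rw [hAa1 _ i.isLt, hBb1 _ i.isLt, hRr1 _ i.isLt, hEe _ i.isLt]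
    ring
  -- Step C: summation by parts
  have hSBP : (∑ k ∈ Finset.range (J+1), (Aa (k+1) * E (k+1) - Aa k * E k) * (E (k+1) - E k))
      = ∑ k ∈ Finset.range J, Aa (k+1) * (E (k+1) * (2*E (k+1) - E (k+2) - E k)) := by
    calc ∑ k ∈ Finset.range (J+1), (Aa (k+1)*E (k+1) - Aa k*E k) * (E (k+1) - E k)
        = ∑ k ∈ Finset.range (J+1), (Aa (k+1)*E (k+1)*(E (k+1) - E k)
            - Aa k*E k*(E (k+1) - E k)) := Finset.sum_congr rfl (fun k _ => by ring)
      _ = (∑ k ∈ Finset.range (J+1), Aa (k+1)*E (k+1)*(E (k+1) - E k))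
          - ∑ k ∈ Finset.range (J+1), Aa k*E k*(E (k+1) - E k) := Finset.sum_sub_distrib _ _
      _ = ((∑ k ∈ Finset.range J, Aa (k+1)*E (k+1)*(E (k+1) - E k))
            + Aa (J+1)*E (J+1)*(E (J+1) - E J))
          - ((∑ k ∈ Finset.range J, Aa (k+1)*E (k+1)*(E (k+1+1) - E (k+1)))
            + Aa 0*E 0*(E (0+1) - E 0)) := by
            rw [Finset.sum_range_succ, Finset.sum_range_succ']
      _ = (∑ k ∈ Finset.range J, Aa (k+1)*E (k+1)*(E (k+1) - E k))
          - ∑ k ∈ Finset.range J, Aa (k+1)*E (k+1)*(E (k+2) - E (k+1)) := by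
            rw [hEtop (J+1) (by omega), hE0]
            simp only [hplus]
            ring
      _ = ∑ k ∈ Finset.range J, (Aa (k+1)*E (k+1)*(E (k+1) - E k)
            - Aa (k+1)*E (k+1)*(E (k+2) - E (k+1))) := (Finset.sum_sub_distrib _ _).symm
      _ = _ := Finset.sum_congr rfl (fun k _ => by ring)
  -- convection rearrangement
  have hCONV : (∑ k ∈ Finset.range (J+1), (Bb k * E k + Bb (k+1) * E (k+1)) * (E (k+1) - E k))
      = ∑ k ∈ Finset.range J, Bb (k+1) * (E (k+1) * (E (k+2) - E k)) := by
    calc ∑ k ∈ Finset.range (J+1), (Bb k*E k + Bb (k+1)*E (k+1)) * (E (k+1) - E k)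
        = ∑ k ∈ Finset.range (J+1), (Bb k*E k*(E (k+1) - E k)
            + Bb (k+1)*E (k+1)*(E (k+1) - E k)) := Finset.sum_congr rfl (fun k _ => by ring)
      _ = (∑ k ∈ Finset.range (J+1), Bb k*E k*(E (k+1) - E k))
          + ∑ k ∈ Finset.range (J+1), Bb (k+1)*E (k+1)*(E (k+1) - E k) := Finset.sum_add_distrib
      _ = ((∑ k ∈ Finset.range J, Bb (k+1)*E (k+1)*(E (k+1+1) - E (k+1)))
            + Bb 0*E 0*(E (0+1) - E 0))
          + ((∑ k ∈ Finset.range J, Bb (k+1)*E (k+1)*(E (k+1) - E k))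
            + Bb (J+1)*E (J+1)*(E (J+1) - E J)) := by
            rw [Finset.sum_range_succ', Finset.sum_range_succ]
      _ = (∑ k ∈ Finset.range J, Bb (k+1)*E (k+1)*(E (k+2) - E (k+1)))
          + ∑ k ∈ Finset.range J, Bb (k+1)*E (k+1)*(E (k+1) - E k) := by
            rw [hEtop (J+1) (by omega), hE0]
            simp only [hplus]
            ring
      _ = ∑ k ∈ Finset.range J, (Bb (k+1)*E (k+1)*(E (k+2) - E (k+1))
            + Bb (k+1)*E (k+1)*(E (k+1) - E k)) := Finset.sum_add_distrib.symm
      _ = _ := Finset.sum_congr rfl (fun k _ => by ring)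
  -- the split of the quadratic form
  set W : ℕ → ℝ := fun k => (Aa (k+1)*E (k+1) - Aa k*E k) * (E (k+1) - E k) / h^2
      + (Bb k*E k + Bb (k+1)*E (k+1)) * (E (k+1) - E k) / (2*h) with hWdef
  have hQsum : ∑ k ∈ Finset.range J, Q k
      = (∑ k ∈ Finset.range (J+1), W k) + ∑ k ∈ Finset.range J, Rr (k+1) * E (k+1)^2 := by
    have h1 : ∑ k ∈ Finset.range (J+1), W k
        = (∑ k ∈ Finset.range (J+1), (Aa (k+1)*E (k+1) - Aa k*E k) * (E (k+1) - E k))/h^2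
          + (∑ k ∈ Finset.range (J+1), (Bb k*E k + Bb (k+1)*E (k+1)) * (E (k+1) - E k))/(2*h) := by
      rw [Finset.sum_div, Finset.sum_div, ← Finset.sum_add_distrib]
    rw [h1, hSBP, hCONV, Finset.sum_div, Finset.sum_div,
      ← Finset.sum_add_distrib, ← Finset.sum_add_distrib]
    refine Finset.sum_congr rfl (fun k _ => ?_)
    simp only [hQdef]
    ring
  -- pointwise coercivity bound
  have hptwise : ∀ k ∈ Finset.range (J+1),
      (η₀/2) * ((E (k+1) - E k)/h)^2 - (2*L^2/η₀ + Mb^2/(2*η₀)) * E k^2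
        - (Mb^2/(2*η₀)) * E (k+1)^2 ≤ W k := by
    intro k hk
    simp only [hWdef]
    have hkJ : k ≤ J := Nat.lt_succ_iff.1 (Finset.mem_range.1 hk)
    exact coercive_pointwise η₀ L Mb h (Aa (k+1)) (Aa k) (Bb k) (Bb (k+1)) (E k) (E (k+1))
      hη hL hMb hh (hAaη _) (hAaL k hkJ) (hBbM _) (hBbM _)
  -- sum identities
  have hsum0 : ∑ k ∈ Finset.range J, E (k+1)^2 = ∑ i, e i^2 := by
    rw [← Fin.sum_univ_eq_sum_range (fun k => E (k+1)^2) J]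
    exact Finset.sum_congr rfl (fun i _ => by rw [hEe _ i.isLt])
  have hsum_u : ∑ k ∈ Finset.range (J+1), E k^2 = ∑ i, e i^2 := by
    rw [Finset.sum_range_succ' (fun k => E k^2), hE0, ← hsum0]; norm_num
  have hsum_v : ∑ k ∈ Finset.range (J+1), E (k+1)^2 = ∑ i, e i^2 := by
    rw [Finset.sum_range_succ (fun k => E (k+1)^2), hEtop (J+1) (by omega), ← hsum0]; norm_num
  have hr1 : ∀ k ∈ Finset.range J, -Mr * E (k+1)^2 ≤ Rr (k+1) * E (k+1)^2 := by
    intro k _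
    exact mul_le_mul_of_nonneg_right (by linarith [(abs_le.1 (hRrM (k+1))).1]) (sq_nonneg _)
  have hr2 : ∑ k ∈ Finset.range J, -Mr * E (k+1)^2 = -(Mr * ∑ i, e i^2) := by
    rw [← Finset.mul_sum, hsum0]; ring
  have hr_bound : -(Mr * ∑ i, e i^2) ≤ ∑ k ∈ Finset.range J, Rr (k+1) * E (k+1)^2 := by
    rw [← hr2]; exact Finset.sum_le_sum hr1
  -- the discrete gradient norm
  have hExt : ∀ m, extz J (fun i => e i / h) m = E m / h := by
    intro m; rw [hE]; unfold extz; split <;> simp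
  have hN : Nsq J (fun i => e i / h) = ∑ k ∈ Finset.range (J+1), ((E (k+1) - E k)/h)^2 := by
    unfold Nsq
    calc ∑ i ∈ Finset.Icc 1 (J+1), (extz J (fun i => e i/h) i - extz J (fun i => e i/h) (i-1))^2
        = ∑ i ∈ Finset.Icc 1 (J+1), ((E i - E (i-1))/h)^2 :=
          Finset.sum_congr rfl (fun i _ => by rw [hExt i, hExt (i-1)]; ring)
      _ = ∑ k ∈ Finset.range (J+1), ((E (k+1) - E k)/h)^2 := by
          rw [← Finset.Ico_add_one_right_eq_Icc, Finset.sum_Ico_eq_sum_range]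
          refine Finset.sum_congr (by norm_num) (fun k _ => ?_)
          rw [show 1+k-1 = k from by omega, show 1+k = k+1 from by omega]
  -- final assembly
  have main := Finset.sum_le_sum hptwise
  have expand : ∑ k ∈ Finset.range (J+1), ((η₀/2)*((E (k+1) - E k)/h)^2
        - (2*L^2/η₀ + Mb^2/(2*η₀))*E k^2 - (Mb^2/(2*η₀))*E (k+1)^2)
      = (η₀/2) * (∑ k ∈ Finset.range (J+1), ((E (k+1) - E k)/h)^2)
        - (2*L^2/η₀ + Mb^2/(2*η₀)) * (∑ k ∈ Finset.range (J+1), E k^2)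
        - (Mb^2/(2*η₀)) * (∑ k ∈ Finset.range (J+1), E (k+1)^2) := by
    rw [Finset.sum_sub_distrib, Finset.sum_sub_distrib, Finset.mul_sum, Finset.mul_sum,
      Finset.mul_sum]
  rw [hsum_u, hsum_v] at expand
  rw [expand] at main
  rw [hQ, hQsum, hN]
  have hsplit2 : (2*L^2/η₀ + Mb^2/η₀ + Mr) * (∑ i, e i^2)
      = (2*L^2/η₀ + Mb^2/(2*η₀))*(∑ i, e i^2) + (Mb^2/(2*η₀))*(∑ i, e i^2)
        + Mr*(∑ i, e i^2) := by ring
  linarith [main, hr_bound, hsplit2]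
end

section
/- Let J ≥ 1, h > 0, η₀ > 0, L ≥ 0, and let a_1,…,a_J ∈ ℝ satisfy a_i ≥ η₀ for all i and |a_i − a_{i−1}| ≤ L h for 2 ≤ i ≤ J. Then for every e ∈ ℝ^J (with the conventions e_0 = e_{J+1} = 0 and arbitrary a_0, a_{J+1} since they are multiplied by e_0, e_{J+1}): (1/h²) Σ_{i=1}^{J+1} (a_i e_i − a_{i−1} e_{i−1})(e_i − e_{i−1}) ≥ η₀ · N(e/h)² − L · ‖e‖₂ · N(e/h), where N(x)² := Σ_{i=1}^{J+1}(x_i − x_{i−1})² with x_0 = x_{J+1} = 0. -/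
/-- Lower bound on the quadratic form of the finite-difference
discretization of the variable-coefficient diffusion `−a(x)∂ₓ²`:
`(1/h²) Σ_{i=1}^{J+1} (a_i e_i − a_{i−1} e_{i−1})(e_i − e_{i−1})
  ≥ η₀ N(e/h)² − L ‖e‖₂ N(e/h)`,
with conventions `e_0 = e_{J+1} = 0` (the values `a_0, a_{J+1}` are arbitrary). -/
theorem diffusion_form_coercivity
    (J : ℕ) (hJ : 1 ≤ J) (h η₀ L : ℝ) (hh : 0 < h) (hη : 0 < η₀) (hL : 0 ≤ L)
    (a e : ℕ → ℝ)
    (ha : ∀ i, 1 ≤ i → i ≤ J → η₀ ≤ a i)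
    (haL : ∀ i, 2 ≤ i → i ≤ J → |a i - a (i-1)| ≤ L * h)
    (he0 : e 0 = 0) (heJ : e (J+1) = 0) :
    η₀ * (∑ i ∈ Finset.Icc 1 (J+1), ((e i - e (i-1)) / h)^2)
      - L * Real.sqrt (∑ i ∈ Finset.Icc 1 J, (e i)^2)
          * Real.sqrt (∑ i ∈ Finset.Icc 1 (J+1), ((e i - e (i-1)) / h)^2)
    ≤ (1/h^2) * ∑ i ∈ Finset.Icc 1 (J+1),
        (a i * e i - a (i-1) * e (i-1)) * (e i - e (i-1)) := by
  set S : ℝ := ∑ i ∈ Finset.Icc 1 (J+1), (e i - e (i-1))^2 with hSdef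
  have hS0 : 0 ≤ S := Finset.sum_nonneg fun i _ => sq_nonneg _
  -- pointwise bound
  have key : ∀ i ∈ Finset.Icc 1 (J+1),
      η₀ * (e i - e (i-1))^2 - (L*h) * (|e (i-1)| * |e i - e (i-1)|)
        ≤ (a i * e i - a (i-1) * e (i-1)) * (e i - e (i-1)) := by
    intro i hi
    simp only [Finset.mem_Icc] at hi
    obtain ⟨h1, h2⟩ := hi
    have hnn : 0 ≤ L*h * (|e (i-1)| * |e i - e (i-1)|) := by positivity
    rcases eq_or_lt_of_le h1 with h1e | h1'
    · -- i = 1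
      subst h1e
      have hA := ha 1 le_rfl hJ
      simp only [Nat.sub_self, he0] at hnn ⊢
      nlinarith [hnn, mul_le_mul_of_nonneg_right hA (sq_nonneg (e 1))]
    · rcases eq_or_lt_of_le h2 with h2e | h2'
      · -- i = J + 1
        subst h2e
        have hA := ha J hJ le_rfl
        simp only [Nat.add_sub_cancel, heJ] at hnn ⊢
        nlinarith [hnn, mul_le_mul_of_nonneg_right hA (sq_nonneg (e J))]
      · -- 2 ≤ i ≤ J
        have hi2 : 2 ≤ i := h1'
        have hiJ : i ≤ J := Nat.lt_succ_iff.mp h2'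
        have hA := ha i (le_trans (by norm_num) hi2) hiJ
        have habs : |(a i - a (i-1)) * (e (i-1) * (e i - e (i-1)))|
            ≤ L*h * (|e (i-1)| * |e i - e (i-1)|) := by
          rw [abs_mul, abs_mul]
          gcongr
          exact haL i hi2 hiJ
        have hlo := neg_abs_le ((a i - a (i-1)) * (e (i-1) * (e i - e (i-1))))
        have hring : (a i * e i - a (i-1) * e (i-1)) * (e i - e (i-1))
            = a i * (e i - e (i-1))^2 + (a i - a (i-1)) * (e (i-1) * (e i - e (i-1))) := by
          ring
        nlinarith [sq_nonneg (e i - e (i-1))]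
  have sum_key : η₀ * S - (L*h) * ∑ i ∈ Finset.Icc 1 (J+1), |e (i-1)| * |e i - e (i-1)|
      ≤ ∑ i ∈ Finset.Icc 1 (J+1), (a i * e i - a (i-1) * e (i-1)) * (e i - e (i-1)) := by
    have := Finset.sum_le_sum key
    rwa [Finset.sum_sub_distrib, ← Finset.mul_sum, ← Finset.mul_sum] at this
  -- Cauchy–Schwarz
  have hCS : ∑ i ∈ Finset.Icc 1 (J+1), |e (i-1)| * |e i - e (i-1)|
      ≤ Real.sqrt (∑ i ∈ Finset.Icc 1 J, (e i)^2) * Real.sqrt S := by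
    have h1 := Real.sum_mul_le_sqrt_mul_sqrt (Finset.Icc 1 (J+1))
      (fun i => |e (i-1)|) (fun i => |e i - e (i-1)|)
    have hshift : ∑ i ∈ Finset.Icc 1 (J+1), (e (i-1))^2 = ∑ i ∈ Finset.Icc 1 J, (e i)^2 := by
      rw [show Finset.Icc 1 (J+1) = Finset.map ⟨(· + 1), add_left_injective 1⟩ (Finset.Icc 0 J) by
        ext x
        simp only [Finset.mem_Icc, Finset.mem_map, Function.Embedding.coeFn_mk]
        constructor
        · intro hx; exact ⟨x - 1, by omega, by omega⟩
        · rintro ⟨y, hy, rfl⟩; omega]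
      rw [Finset.sum_map]
      simp only [Function.Embedding.coeFn_mk, Nat.add_sub_cancel]
      rw [show Finset.Icc 0 J = insert 0 (Finset.Icc 1 J) by ext x; simp; omega]
      rw [Finset.sum_insert (by simp)]
      simp [he0]
    simp only [sq_abs] at h1
    rw [hshift] at h1
    exact h1
  have hmul : (L*h) * (∑ i ∈ Finset.Icc 1 (J+1), |e (i-1)| * |e i - e (i-1)|)
      ≤ (L*h) * (Real.sqrt (∑ i ∈ Finset.Icc 1 J, (e i)^2) * Real.sqrt S) :=
    mul_le_mul_of_nonneg_left hCS (by positivity)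
  -- Rewrite the goal in terms of `S`
  have hsum : ∑ i ∈ Finset.Icc 1 (J+1), ((e i - e (i-1)) / h)^2 = S / h^2 := by
    rw [hSdef, Finset.sum_div]
    exact Finset.sum_congr rfl fun i _ => by rw [div_pow]
  rw [hsum]
  have hsqrt : Real.sqrt (S / h^2) = Real.sqrt S / h := by
    rw [Real.sqrt_div hS0, Real.sqrt_sq hh.le]
  rw [hsqrt]
  set E : ℝ := Real.sqrt (∑ i ∈ Finset.Icc 1 J, (e i)^2)
  set T : ℝ := ∑ i ∈ Finset.Icc 1 (J+1), (a i * e i - a (i-1) * e (i-1)) * (e i - e (i-1))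
  have hkey : η₀ * S - (L*h) * (E * Real.sqrt S) ≤ T := le_trans (by linarith) sum_key
  have hdiv : (η₀ * S - (L*h) * (E * Real.sqrt S)) / h^2 ≤ T / h^2 := by
    gcongr
  have heq : (η₀ * S - (L*h) * (E * Real.sqrt S)) / h^2
      = η₀ * (S / h^2) - L * E * (Real.sqrt S / h) := by
    field_simp
    try ring
  rw [heq] at hdiv
  have hTT : 1/h^2 * T = T / h^2 := by ring
  linarith [hdiv, hTT.le, hTT.ge]
end

section
/- Let J ≥ 1, let B be a J×J real matrix, and let u, v, g, b_u, b_v, d ∈ ℝ^J. Assume min(Bu − b_u, u − g) = 0 and min(Bv − (b_v + d), v − g) = 0 (componentwise minima). Then ⟨B(v − u) − (b_v − b_u) − d, v − u⟩ ≤ 0, where ⟨·,·⟩ is the Euclidean inner product on ℝ^J. -/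
/-- Comparison of the exact and perturbed obstacle problems:
if `min(Bu − b_u, u − g) = 0` and `min(Bv − (b_v + d), v − g) = 0`, then
`⟨B(v − u) − (b_v − b_u) − d, v − u⟩ ≤ 0`. -/
theorem obstacle_scheme_comparison
    (J : ℕ) (hJ : 1 ≤ J) (B : Matrix (Fin J) (Fin J) ℝ)
    (u v g bu bv d : Fin J → ℝ)
    (hu : ∀ j, min ((B.mulVec u - bu) j) ((u - g) j) = 0)
    (hv : ∀ j, min ((B.mulVec v - (bv + d)) j) ((v - g) j) = 0) :
    ∑ j, (B.mulVec (v - u) - (bv - bu) - d) j * (v - u) j ≤ 0 := by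
  apply Finset.sum_nonpos
  intro j _
  have h1 := hu j
  have h2 := hv j
  simp only [Pi.sub_apply, Pi.add_apply] at h1 h2 ⊢
  rw [Matrix.mulVec_sub]
  simp only [Pi.sub_apply]
  rcases min_eq_iff.mp h1 with ⟨e1, l1⟩ | ⟨e1, l1⟩ <;>
    rcases min_eq_iff.mp h2 with ⟨e2, l2⟩ | ⟨e2, l2⟩ <;>
    nlinarith [e1, l1, e2, l2]
end

section
/- Let J ≥ 1, h > 0, η > 0, γ ≥ 0, T > 0, and let A be a J×J real matrix satisfying the coercivity estimate ⟨e, A e⟩ ≥ η N(e/h)² − γ ‖e‖₂² for all e ∈ ℝ^J, where N(x)² = Σ_{i=1}^{J+1}(x_i − x_{i−1})² with x_0 = x_{J+1} = 0. Set γ̄ := 2 + 4γ and t_n := nτ. Then there exist τ₀ > 0 and a constant C₁ ≥ 0 (depending only on η, γ, not on J, h, τ, T) with the following property. Let 0 < τ ≤ τ₀, let N ≥ 2 with Nτ ≤ T, and let (u^n)_{0≤n≤N}, (v^n)_{0≤n≤N}, (g^n)_{2≤n≤N}, (c^n)_{2≤n≤N}, (ε̄^n)_{1≤n≤N−1} be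 vectors in ℝ^J such that for all 1 ≤ n ≤ N−1: min( (I + (2τ/3)A) u^{n+1} − (4/3)u^n + (1/3)u^{n−1} + c^{n+1}, u^{n+1} − g^{n+1} ) = 0 and min( (I + (2τ/3)A) v^{n+1} − (4/3)v^n + (1/3)v^{n−1} + c^{n+1} − (2τ/3) ε̄^n, v^{n+1} − g^{n+1} ) = 0 (componentwise minima). Then, with e^n := v^n − u^n, for all 1 ≤ n ≤ N−1: e^{−γ̄ t_n} ‖e^{n+1}‖₂² + τ η Σ_{k=1}^{n} e^{−γ̄ t_k} N(e^{k+1}/h)² ≤ C₁ ( ‖e^0‖₂² + ‖e^1‖₂² + τ Σ_{k=1}^{n} e^{−γ̄ t_k} ‖ε̄^k‖₂² ). -/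
lemma Nsq_nonneg' (J : ℕ) (x : Fin J → ℝ) : 0 ≤ Nsq J x := by
  apply Finset.sum_nonneg; intros; positivity

lemma minmin' {a b a' b' : ℝ} (h : min a b = 0) (h' : min a' b' = 0) :
    (b' - b) * (a' - a) ≤ 0 := by
  rw [min_eq_iff] at h h'
  rcases h with ⟨h1, h2⟩ | ⟨h1, h2⟩ <;> rcases h' with ⟨h3, h4⟩ | ⟨h3, h4⟩ <;> nlinarith

noncomputable def Ebdf (J : ℕ) (v u : ℕ → Fin J → ℝ) (k : ℕ) : ℝ :=
  (∑ j, ((v k - u k) j)^2) + ∑ j, (2*((v k - u k) j) - (v (k-1) - u (k-1)) j)^2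

lemma Ebdf_nonneg (J : ℕ) (v u : ℕ → Fin J → ℝ) (k : ℕ) : 0 ≤ Ebdf J v u k := by
  unfold Ebdf
  have h1 : (0:ℝ) ≤ ∑ j, ((v k - u k) j)^2 := by positivity
  have h2 : (0:ℝ) ≤ ∑ j, (2*((v k - u k) j) - (v (k-1) - u (k-1)) j)^2 := by positivity
  linarith

lemma sq_le_Ebdf (J : ℕ) (v u : ℕ → Fin J → ℝ) (k : ℕ) :
    ∑ j, ((v k - u k) j)^2 ≤ Ebdf J v u k := by
  unfold Ebdf
  have h2 : (0:ℝ) ≤ ∑ j, (2*((v k - u k) j) - (v (k-1) - u (k-1)) j)^2 := by positivity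
  linarith

lemma Ebdf_one_le (J : ℕ) (v u : ℕ → Fin J → ℝ) :
    Ebdf J v u 1 ≤ 9 * ((∑ j, ((v 0 - u 0) j)^2) + ∑ j, ((v 1 - u 1) j)^2) := by
  unfold Ebdf
  simp only [Nat.sub_self]
  have h : ∑ j, (2*((v 1 - u 1) j) - (v 0 - u 0) j)^2
      ≤ ∑ j, (8*((v 1 - u 1) j)^2 + 2*((v 0 - u 0) j)^2) := by
    apply Finset.sum_le_sum; intro j _; nlinarith [sq_nonneg (2*((v 1 - u 1) j) + (v 0 - u 0) j)]
  rw [Finset.sum_add_distrib] at h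
  rw [← Finset.mul_sum, ← Finset.mul_sum] at h
  have h0 : (0:ℝ) ≤ ∑ j, ((v 0 - u 0) j)^2 := by positivity
  linarith

lemma exp_step_bound {γ τ : ℝ} (hγ : 0 ≤ γ) (hτ : 0 < τ) (hττ : τ ≤ 1/(2+4*γ)^2) :
    Real.exp (-((2+4*γ)*τ)) ≤ 1 - (1+4*γ)*τ := by
  have hgb : (2:ℝ) ≤ 2 + 4*γ := by linarith
  have hx : (0:ℝ) < Real.exp ((2+4*γ)*τ) := Real.exp_pos _
  have h1 : (2+4*γ)*τ + 1 ≤ Real.exp ((2+4*γ)*τ) := Real.add_one_le_exp _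
  have hsq : (2+4*γ)^2 * τ ≤ 1 := by
    have h2 : (0:ℝ) < (2+4*γ)^2 := by positivity
    calc (2+4*γ)^2 * τ ≤ (2+4*γ)^2 * (1/(2+4*γ)^2) :=
          mul_le_mul_of_nonneg_left hττ (le_of_lt h2)
      _ = 1 := by field_simp
  have hpos : 0 < 1 - (1+4*γ)*τ := by nlinarith
  have h3 : (1+4*γ)*(2+4*γ)*τ ≤ 1 := by nlinarith
  have key : 1 ≤ (1 - (1+4*γ)*τ) * Real.exp ((2+4*γ)*τ) := by
    nlinarith [mul_le_mul_of_nonneg_right h3 hτ.le,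
      mul_le_mul_of_nonneg_left h1 hpos.le]
  rw [Real.exp_neg]
  rw [inv_le_iff_one_le_mul₀ hx]
  linarith [key]

lemma exp_small {γ τ : ℝ} (hγ : 0 ≤ γ) (hτ : 0 < τ) (hττ : τ ≤ 1/(2+4*γ)^2) :
    Real.exp ((2+4*γ)*τ) ≤ 3 := by
  have hgb : (2:ℝ) ≤ 2 + 4*γ := by linarith
  have hsq : (2+4*γ)^2 * τ ≤ 1 := by
    have h2 : (0:ℝ) < (2+4*γ)^2 := by positivity
    calc (2+4*γ)^2 * τ ≤ (2+4*γ)^2 * (1/(2+4*γ)^2) :=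
          mul_le_mul_of_nonneg_left hττ (le_of_lt h2)
      _ = 1 := by field_simp
  have h1 : (2+4*γ)*τ ≤ 1 := by nlinarith
  calc Real.exp ((2+4*γ)*τ) ≤ Real.exp 1 := Real.exp_le_exp.mpr h1
    _ ≤ 3 := by linarith [Real.exp_one_lt_d9]

lemma step_ineq (J : ℕ) (η γ τ h : ℝ) (hγ : 0 ≤ γ) (hτ : 0 < τ)
    (A : Matrix (Fin J) (Fin J) ℝ)
    (hA : ∀ e : Fin J → ℝ,
      η * Nsq J (fun i => e i / h) - γ * ∑ i, (e i)^2 ≤ ∑ i, e i * A.mulVec e i)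
    (x y z w : Fin J → ℝ)
    (hmin : ∀ j, x j * (x j + (2*τ/3) * A.mulVec x j - (4/3) * y j + (1/3) * z j
        - (2*τ/3) * w j) ≤ 0) :
    (1 - (1+4*γ)*τ) * ((∑ j, (x j)^2) + ∑ j, (2*x j - y j)^2)
        + 4*(τ*η) * Nsq J (fun i => x i / h)
      ≤ ((∑ j, (y j)^2) + ∑ j, (2*y j - z j)^2) + 4*τ * ∑ j, (w j)^2 := by
  have hsum : (∑ j, (x j)^2) + (2*τ/3) * (∑ j, x j * A.mulVec x j)
      - (4/3) * (∑ j, x j * y j) + (1/3) * (∑ j, x j * z j)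
      - (2*τ/3) * (∑ j, x j * w j) ≤ 0 := by
    have hs := Finset.sum_nonpos (s := Finset.univ) (fun j _ => hmin j)
    calc _ = ∑ j, x j * (x j + (2*τ/3) * (A.mulVec x) j - (4/3) * y j + (1/3) * z j
          - (2*τ/3) * w j) := by
          simp only [Finset.mul_sum, ← Finset.sum_add_distrib, ← Finset.sum_sub_distrib]
          exact Finset.sum_congr rfl (fun j _ => by ring)
      _ ≤ 0 := hs
  have hA1 : ∑ j, (2*x j - y j)^2
      = 4*(∑ j, (x j)^2) - 4*(∑ j, x j * y j) + ∑ j, (y j)^2 := by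
    simp only [Finset.mul_sum, ← Finset.sum_add_distrib, ← Finset.sum_sub_distrib]
    exact Finset.sum_congr rfl (fun j _ => by ring)
  have hA0 : ∑ j, (2*y j - z j)^2
      = 4*(∑ j, (y j)^2) - 4*(∑ j, y j * z j) + ∑ j, (z j)^2 := by
    simp only [Finset.mul_sum, ← Finset.sum_add_distrib, ← Finset.sum_sub_distrib]
    exact Finset.sum_congr rfl (fun j _ => by ring)
  have hWid : ∑ j, (x j - 2*y j + z j)^2
      = (∑ j, (x j)^2) + 4*(∑ j, (y j)^2) + (∑ j, (z j)^2) - 4*(∑ j, x j * y j)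
        + 2*(∑ j, x j * z j) - 4*(∑ j, y j * z j) := by
    simp only [Finset.mul_sum, ← Finset.sum_add_distrib, ← Finset.sum_sub_distrib]
    exact Finset.sum_congr rfl (fun j _ => by ring)
  have hW : (0:ℝ) ≤ ∑ j, (x j - 2*y j + z j)^2 := by positivity
  have hco := mul_le_mul_of_nonneg_left (hA x) (by positivity : (0:ℝ) ≤ 4*τ)
  have hY : (∑ j, x j * w j) ≤ (1/4) * (∑ j, (x j)^2) + ∑ j, (w j)^2 := by
    have hterm : ∑ j, x j * w j ≤ ∑ j, ((1/4)*(x j)^2 + (w j)^2) := by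
      apply Finset.sum_le_sum; intro j _; nlinarith [sq_nonneg (x j - 2*w j)]
    rw [Finset.sum_add_distrib, ← Finset.mul_sum] at hterm
    exact hterm
  have hY' := mul_le_mul_of_nonneg_left hY (by positivity : (0:ℝ) ≤ 4*τ)
  have hM1 : (0:ℝ) ≤ ∑ j, (2*x j - y j)^2 := by positivity
  have hM1τ : (0:ℝ) ≤ τ * ∑ j, (2*x j - y j)^2 := mul_nonneg hτ.le hM1
  have hM1γτ : (0:ℝ) ≤ γ * (τ * ∑ j, (2*x j - y j)^2) := mul_nonneg hγ hM1τ
  linarith [hsum, hA1, hA0, hWid, hW, hco, hY', hM1τ, hM1γτ]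

lemma telescope_ineq (N : ℕ) (E Nn Se w : ℕ → ℝ) (ρ a b : ℝ)
    (hw : ∀ k, w (k+1) = w k * ρ)
    (hwpos : ∀ k, 0 < w k)
    (step : ∀ m, 1 ≤ m → m ≤ N - 1 → ρ * E (m+1) + a * Nn (m+1) ≤ E m + b * Se m) :
    ∀ m, 1 ≤ m → m ≤ N - 1 →
      w (m+1) * E (m+1) + a * ∑ k ∈ Finset.Icc 1 m, w k * Nn (k+1)
        ≤ w 1 * E 1 + b * ∑ k ∈ Finset.Icc 1 m, w k * Se k := by
  intro m hm1
  induction m, hm1 using Nat.le_induction with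
  | base =>
    intro hle
    have hs := mul_le_mul_of_nonneg_left (step 1 le_rfl hle) (hwpos 1).le
    simp only [Finset.Icc_self, Finset.sum_singleton]
    rw [hw 1]
    nlinarith [hs]
  | succ m hm ih =>
    intro hle
    have ihm := ih (by omega)
    have hs := mul_le_mul_of_nonneg_left (step (m+1) (by omega) hle) (hwpos (m+1)).le
    rw [Finset.sum_Icc_succ_top (by omega : 1 ≤ m+1),
      Finset.sum_Icc_succ_top (by omega : 1 ≤ m+1)]
    rw [hw (m+1)]
    nlinarith [hs, ihm]

/-- Unconditional `L²` stability estimate for the BDF2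
obstacle scheme: if `A` satisfies the coercivity estimate
`⟨e, Ae⟩ ≥ η N(e/h)² − γ ‖e‖₂²`, then with `γ̄ = 2 + 4γ`, `t_n = nτ`, there are
`τ₀ > 0` and `C₁ ≥ 0` (depending only on `η, γ`) such that the solutions of the
BDF2 obstacle scheme and of its perturbation by `ε̄ⁿ` satisfy, with
`eⁿ = vⁿ − uⁿ`,
`e^{−γ̄ t_n} ‖e^{n+1}‖₂² + τη Σ_{k=1}^n e^{−γ̄ t_k} N(e^{k+1}/h)²
   ≤ C₁(‖e⁰‖₂² + ‖e¹‖₂² + τ Σ_{k=1}^n e^{−γ̄ t_k} ‖ε̄ᵏ‖₂²)`. -/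
theorem bdf2_obstacle_stability
    (η γ : ℝ) (hη : 0 < η) (hγ : 0 ≤ γ) :
    ∃ τ₀ : ℝ, 0 < τ₀ ∧ ∃ C₁ : ℝ, 0 ≤ C₁ ∧
      ∀ (J : ℕ), 1 ≤ J → ∀ (h : ℝ), 0 < h → ∀ (T : ℝ), 0 < T →
      ∀ A : Matrix (Fin J) (Fin J) ℝ,
        (∀ e : Fin J → ℝ,
          η * Nsq J (fun i => e i / h) - γ * ∑ i, (e i)^2 ≤ ∑ i, e i * A.mulVec e i) →
      ∀ τ : ℝ, 0 < τ → τ ≤ τ₀ →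
      ∀ N : ℕ, 2 ≤ N → (N : ℝ) * τ ≤ T →
      ∀ u v g c ε : ℕ → Fin J → ℝ,
        (∀ n, 1 ≤ n → n ≤ N - 1 → ∀ j,
          min ((((1 : Matrix (Fin J) (Fin J) ℝ) + (2*τ/3) • A).mulVec (u (n+1))
              - (4/3 : ℝ) • u n + (1/3 : ℝ) • u (n-1) + c (n+1)) j)
            ((u (n+1) - g (n+1)) j) = 0) →
        (∀ n, 1 ≤ n → n ≤ N - 1 → ∀ j,
          min ((((1 : Matrix (Fin J) (Fin J) ℝ) + (2*τ/3) • A).mulVec (v (n+1))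
              - (4/3 : ℝ) • v n + (1/3 : ℝ) • v (n-1) + c (n+1)
              - (2*τ/3) • ε n) j)
            ((v (n+1) - g (n+1)) j) = 0) →
      ∀ n, 1 ≤ n → n ≤ N - 1 →
        Real.exp (-(2 + 4*γ) * ((n : ℝ) * τ)) * ∑ j, ((v (n+1) - u (n+1)) j)^2
          + τ * η * ∑ k ∈ Finset.Icc 1 n,
              Real.exp (-(2 + 4*γ) * ((k : ℝ) * τ))
                * Nsq J (fun j => (v (k+1) - u (k+1)) j / h)
        ≤ C₁ * (∑ j, ((v 0 - u 0) j)^2 + ∑ j, ((v 1 - u 1) j)^2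
            + τ * ∑ k ∈ Finset.Icc 1 n,
                Real.exp (-(2 + 4*γ) * ((k : ℝ) * τ)) * ∑ j, (ε k j)^2) := by
  refine ⟨1/(2+4*γ)^2, by positivity, 27, by norm_num, ?_⟩
  intro J hJ h hh T hT A hA τ hτ hττ N hN hNT u v g c ε hu hv
  -- componentwise complementarity product
  have hmin : ∀ m, 1 ≤ m → m ≤ N - 1 → ∀ j,
      (v (m+1) - u (m+1)) j * ((v (m+1) - u (m+1)) j
        + (2*τ/3) * A.mulVec (v (m+1) - u (m+1)) j
        - (4/3) * (v m - u m) j + (1/3) * (v (m-1) - u (m-1)) j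
        - (2*τ/3) * ε m j) ≤ 0 := by
    intro m hm1 hm2 j
    have h3 := minmin' (hu m hm1 hm2 j) (hv m hm1 hm2 j)
    have hb : (v (m+1) - g (m+1)) j - (u (m+1) - g (m+1)) j = (v (m+1) - u (m+1)) j := by
      simp
    have ha : (((1 : Matrix (Fin J) (Fin J) ℝ) + (2*τ/3) • A).mulVec (v (m+1))
        - (4/3 : ℝ) • v m + (1/3 : ℝ) • v (m-1) + c (m+1) - (2*τ/3) • ε m) j
        - (((1 : Matrix (Fin J) (Fin J) ℝ) + (2*τ/3) • A).mulVec (u (m+1))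
        - (4/3 : ℝ) • u m + (1/3 : ℝ) • u (m-1) + c (m+1)) j
        = (v (m+1) - u (m+1)) j + (2*τ/3) * A.mulVec (v (m+1) - u (m+1)) j
          - (4/3) * (v m - u m) j + (1/3) * (v (m-1) - u (m-1)) j - (2*τ/3) * ε m j := by
      simp [Matrix.add_mulVec, Matrix.one_mulVec, Matrix.smul_mulVec,
        Matrix.mulVec_sub, smul_eq_mul]
      ring
    rw [hb, ha] at h3
    exact h3
  -- weighted one-step energy inequality
  have wstep : ∀ m, 1 ≤ m → m ≤ N - 1 →
      Real.exp (-((2+4*γ)*τ)) * Ebdf J v u (m+1)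
        + 4*(τ*η) * Nsq J (fun i => (v (m+1) - u (m+1)) i / h)
      ≤ Ebdf J v u m + 4*τ * ∑ j, (ε m j)^2 := by
    intro m hm1 hm2
    have hst := step_ineq J η γ τ h hγ hτ A hA (v (m+1) - u (m+1)) (v m - u m)
      (v (m-1) - u (m-1)) (ε m) (hmin m hm1 hm2)
    have hE1 : Ebdf J v u (m+1) = (∑ j, ((v (m+1) - u (m+1)) j)^2)
        + ∑ j, (2*((v (m+1) - u (m+1)) j) - (v m - u m) j)^2 := by
      unfold Ebdf; simp
    have hE0 : Ebdf J v u m = (∑ j, ((v m - u m) j)^2)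
        + ∑ j, (2*((v m - u m) j) - (v (m-1) - u (m-1)) j)^2 := rfl
    have hEpos := Ebdf_nonneg J v u (m+1)
    have hexp := exp_step_bound hγ hτ hττ
    have hmul : Real.exp (-((2+4*γ)*τ)) * Ebdf J v u (m+1)
        ≤ (1-(1+4*γ)*τ) * Ebdf J v u (m+1) :=
      mul_le_mul_of_nonneg_right hexp hEpos
    rw [hE1, hE0]
    rw [hE1] at hmul
    linarith [hst, hmul]
  -- telescoped inequality
  have hwmul : ∀ k : ℕ, Real.exp (-(2+4*γ) * (((k+1:ℕ):ℝ) * τ))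
      = Real.exp (-(2+4*γ) * ((k:ℝ) * τ)) * Real.exp (-((2+4*γ)*τ)) := by
    intro k; rw [← Real.exp_add]; push_cast; ring_nf
  have main := telescope_ineq N (Ebdf J v u)
      (fun k => Nsq J (fun j => (v k - u k) j / h))
      (fun k => ∑ j, (ε k j)^2)
      (fun k => Real.exp (-(2+4*γ) * ((k:ℝ) * τ)))
      (Real.exp (-((2+4*γ)*τ))) (4*(τ*η)) (4*τ)
      hwmul (fun k => Real.exp_pos _)
      (fun m hm1 hm2 => wstep m hm1 hm2)
  -- final assembly
  intro n hn1 hn2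
  have hm := main n hn1 hn2
  push_cast at hm
  have hq : ∑ j, ((v (n+1) - u (n+1)) j)^2 ≤ Ebdf J v u (n+1) := sq_le_Ebdf J v u (n+1)
  have h3 : Real.exp ((2+4*γ)*τ) ≤ 3 := exp_small hγ hτ hττ
  have hwrel : Real.exp (-(2+4*γ) * ((n:ℝ) * τ))
      = Real.exp ((2+4*γ)*τ) * Real.exp (-(2+4*γ) * (((n:ℝ)+1) * τ)) := by
    rw [← Real.exp_add]; ring_nf
  have hwn1pos : (0:ℝ) < Real.exp (-(2+4*γ) * (((n:ℝ)+1) * τ)) := Real.exp_pos _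
  have hEn1 := Ebdf_nonneg J v u (n+1)
  have step1 : Real.exp (-(2+4*γ) * ((n:ℝ) * τ)) * ∑ j, ((v (n+1) - u (n+1)) j)^2
      ≤ 3 * (Real.exp (-(2+4*γ) * (((n:ℝ)+1) * τ)) * Ebdf J v u (n+1)) := by
    rw [hwrel]
    have a1 : (0:ℝ) < Real.exp ((2+4*γ)*τ) * Real.exp (-(2+4*γ) * (((n:ℝ)+1) * τ)) :=
      mul_pos (Real.exp_pos _) hwn1pos
    have b1 := mul_le_mul_of_nonneg_left hq a1.le
    have b2 := mul_le_mul_of_nonneg_right h3 (mul_nonneg hwn1pos.le hEn1)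
    nlinarith [b1, b2]
  have he1 : Real.exp (-(2+4*γ) * ((1:ℝ) * τ)) ≤ 1 := by
    apply Real.exp_le_one_iff.mpr; nlinarith
  have hE1nn := Ebdf_nonneg J v u 1
  have hE1w : Real.exp (-(2+4*γ) * ((1:ℝ) * τ)) * Ebdf J v u 1 ≤ Ebdf J v u 1 :=
    mul_le_of_le_one_left hE1nn he1
  have hE1le := Ebdf_one_le J v u
  have hSN : (0:ℝ) ≤ ∑ k ∈ Finset.Icc 1 n, Real.exp (-(2+4*γ) * ((k:ℝ) * τ))
      * Nsq J (fun j => (v (k+1) - u (k+1)) j / h) := by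
    apply Finset.sum_nonneg; intro k _
    exact mul_nonneg (Real.exp_pos _).le (Nsq_nonneg' _ _)
  have hSe : (0:ℝ) ≤ ∑ k ∈ Finset.Icc 1 n, Real.exp (-(2+4*γ) * ((k:ℝ) * τ))
      * ∑ j, (ε k j)^2 := by
    apply Finset.sum_nonneg; intro k _
    apply mul_nonneg (Real.exp_pos _).le; positivity
  have hts1 : (0:ℝ) ≤ τ * η * ∑ k ∈ Finset.Icc 1 n, Real.exp (-(2+4*γ) * ((k:ℝ) * τ))
      * Nsq J (fun j => (v (k+1) - u (k+1)) j / h) :=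
    mul_nonneg (mul_nonneg hτ.le hη.le) hSN
  have hts2 : (0:ℝ) ≤ τ * ∑ k ∈ Finset.Icc 1 n, Real.exp (-(2+4*γ) * ((k:ℝ) * τ))
      * ∑ j, (ε k j)^2 := mul_nonneg hτ.le hSe
  linarith [hm, step1, hE1w, hE1le, hts1, hts2]
end
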